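/- arXiv:1508.01602 — 5 statements merged into one kernel-verified Lean document; each statement's English description precedes it below -/
import Mathlib

section
/- Relative-entropy decomposition bound: Let P and Q be probability mass functions on a finite set X with P absolutely continuous with respect to Q, and suppose P = P₁ + P₂ where P₁ and P₂ are nonnegative measures on X, each absolutely continuous with respect to Q. Then d(P, Q) ≤ h(∑_x P₁(x)) + ∑_{x : P₁(x) > 0} P₁(x) log₂(P₁(x)/Q(x)) + ∑_{x : P₂(x) > 0} P₂(x) log₂(P₂(x)/Q(x)), where h(t) = −t log₂ t − (1−t) log₂(1−t) is the binary entropy function (with h(0) = h(1) = 0). -/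
open scoped BigOperators Classical
open Finset

noncomputable section SoftCovering

/-- The `n`-fold i.i.d. extension of a pmf `Q`. -/
def prodPMF {U : Type} (Q : U → ℝ) (n : ℕ) : (Fin n → U) → ℝ :=
  fun x => ∏ i, Q (x i)

/-- The `n`-fold memoryless extension of a channel `W`. -/
def prodChannel {U V : Type} (W : U → V → ℝ) (n : ℕ) : (Fin n → U) → (Fin n → V) → ℝ :=
  fun x y => ∏ i, W (x i) (y i)

/-- Output marginal `Q_V(v) = ∑ u, Q_U(u) Q_{V|U}(v|u)`. -/
def outputMarginal {U V : Type} [Fintype U] (Q : U → ℝ) (W : U → V → ℝ) : V → ℝ :=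
  fun v => ∑ u, Q u * W u v

/-- Relative entropy (KL divergence) in bits, summed over the support of `P`. -/
def klDiv {X : Type} [Fintype X] (P Q : X → ℝ) : ℝ :=
  ∑ x, if 0 < P x then P x * Real.logb 2 (P x / Q x) else 0

/-- Mutual information in bits: `I_Q(U;V) = d(Q_{U,V}, Q_U × Q_V)`. -/
def mutualInfo {U V : Type} [Fintype U] [Fintype V] (Q : U → ℝ) (W : U → V → ℝ) : ℝ :=
  klDiv (fun p : U × V => Q p.1 * W p.1 p.2)
        (fun p : U × V => Q p.1 * outputMarginal Q W p.2)

/-- The jointly typical set `A_ε`. -/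
def typicalSet {U V : Type} [Fintype U] [Fintype V] (Q : U → ℝ) (W : U → V → ℝ)
    (n : ℕ) (ε : ℝ) : Set ((Fin n → U) × (Fin n → V)) :=
  {p | (1 / (n : ℝ)) * Real.logb 2
      (prodChannel W n p.1 p.2 / prodPMF (outputMarginal Q W) n p.2)
      ≤ mutualInfo Q W + ε}

/-- Probability weight of a particular codebook under i.i.d. codeword generation. -/
def cbProb {U : Type} (Q : U → ℝ) (n M : ℕ) (C : Fin M → Fin n → U) : ℝ :=
  ∏ m, prodPMF Q n (C m)

/-- Probability, over the random codebook, of the event `S`. -/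
def cbP {U : Type} [Fintype U] (Q : U → ℝ) (n M : ℕ)
    (S : (Fin M → Fin n → U) → Prop) : ℝ :=
  ∑ C : Fin M → Fin n → U, if S C then cbProb Q n M C else 0

/-- Expectation, over the random codebook, of `f`. -/
def cbE {U : Type} [Fintype U] (Q : U → ℝ) (n M : ℕ)
    (f : (Fin M → Fin n → U) → ℝ) : ℝ :=
  ∑ C : Fin M → Fin n → U, cbProb Q n M C * f C

/-- The induced output distribution `P_{V^n|𝒞}`. -/
def inducedDist {U V : Type} (W : U → V → ℝ) (n M : ℕ) (C : Fin M → Fin n → U) :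
    (Fin n → V) → ℝ :=
  fun y => (M : ℝ)⁻¹ * ∑ m, prodChannel W n (C m) y

/-- The typical part `P_{𝒞,1}` of the induced distribution. -/
def PC1 {U V : Type} [Fintype U] [Fintype V] (Q : U → ℝ) (W : U → V → ℝ) (n M : ℕ)
    (ε : ℝ) (C : Fin M → Fin n → U) : (Fin n → V) → ℝ :=
  fun y => (M : ℝ)⁻¹ *
    ∑ m, if (C m, y) ∈ typicalSet Q W n ε then prodChannel W n (C m) y else 0

/-- The atypical part `P_{𝒞,2}` of the induced distribution. -/
def PC2 {U V : Type} [Fintype U] [Fintype V] (Q : U → ℝ) (W : U → V → ℝ) (n M : ℕ)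
    (ε : ℝ) (C : Fin M → Fin n → U) : (Fin n → V) → ℝ :=
  fun y => (M : ℝ)⁻¹ *
    ∑ m, if (C m, y) ∉ typicalSet Q W n ε then prodChannel W n (C m) y else 0

/-- Density `D_{𝒞,1}` of `P_{𝒞,1}` with respect to `Q_{V^n}`. -/
def DC1 {U V : Type} [Fintype U] [Fintype V] (Q : U → ℝ) (W : U → V → ℝ) (n M : ℕ)
    (ε : ℝ) (C : Fin M → Fin n → U) : (Fin n → V) → ℝ :=
  fun y => PC1 Q W n M ε C y / prodPMF (outputMarginal Q W) n y

/-- Density `D_{𝒞,2}` of `P_{𝒞,2}` with respect to `Q_{V^n}`. -/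
def DC2 {U V : Type} [Fintype U] [Fintype V] (Q : U → ℝ) (W : U → V → ℝ) (n M : ℕ)
    (ε : ℝ) (C : Fin M → Fin n → U) : (Fin n → V) → ℝ :=
  fun y => PC2 Q W n M ε C y / prodPMF (outputMarginal Q W) n y

/-- `max_{v : Q_V(v) > 0} 1 / Q_V(v)`. -/
def maxInvQV {U V : Type} [Fintype U] (Q : U → ℝ) (W : U → V → ℝ) : ℝ :=
  sSup ((fun v => (outputMarginal Q W v)⁻¹) '' {v | 0 < outputMarginal Q W v})

/-- Rényi divergence of order `α` in bits. -/
def renyiDiv {X : Type} [Fintype X] (α : ℝ) (P Q : X → ℝ) : ℝ :=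
  (α - 1)⁻¹ * Real.logb 2 (∑ x, P x ^ α * Q x ^ (1 - α))

/-- Binary entropy function in bits. -/
def binEnt (x : ℝ) : ℝ := -(x * Real.logb 2 x) - (1 - x) * Real.logb 2 (1 - x)

/-- `P` is a probability mass function. -/
def IsPMF {X : Type} [Fintype X] (P : X → ℝ) : Prop :=
  (∀ x, 0 ≤ P x) ∧ ∑ x, P x = 1

/-- Probability that an i.i.d. pair sequence from `Q_{U,V}` is not jointly typical. -/
def atypProb {U V : Type} [Fintype U] [Fintype V] (Q : U → ℝ) (W : U → V → ℝ)
    (n : ℕ) (ε : ℝ) : ℝ :=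
  ∑ x : Fin n → U, ∑ y : Fin n → V,
    if (x, y) ∉ typicalSet Q W n ε then ∏ i, Q (x i) * W (x i) (y i) else 0

end SoftCovering


lemma aux_jensen {X : Type} [Fintype X] (P R : X → ℝ) (hR : ∀ x, 0 ≤ R x)
    (hRP : ∀ x, R x ≤ P x) (hPsum : ∑ x, P x = 1) :
    (∑ x, if 0 < R x then R x * Real.logb 2 (P x / R x) else 0)
      ≤ -((∑ x, R x) * Real.logb 2 (∑ x, R x)) := by
  have hPnn : ∀ x, 0 ≤ P x := fun x => le_trans (hR x) (hRP x)
  rcases eq_or_lt_of_le (Finset.sum_nonneg fun x _ => hR x) with h0 | hpos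
  · have hall : ∀ x, R x = 0 := fun x =>
      (Finset.sum_eq_zero_iff_of_nonneg (fun x _ => hR x)).mp h0.symm x (Finset.mem_univ x)
    simp [hall]
  · set p := ∑ x, R x with hp
    have hlog2 : (0:ℝ) < Real.log 2 := Real.log_pos one_lt_two
    have key : ∀ x ∈ Finset.univ, (if 0 < R x then R x * Real.logb 2 (P x / R x) else 0)
        ≤ (if 0 < R x then (p * P x - R x) / Real.log 2 else 0)
          - (if 0 < R x then R x else 0) * Real.logb 2 p := by
      intro x _
      by_cases h : 0 < R x
      · simp only [h, if_pos]
        have hPx : 0 < P x := lt_of_lt_of_le h (hRP x)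
        have h1 : Real.logb 2 (P x / R x)
            = Real.logb 2 (p * P x / R x) - Real.logb 2 p := by
          rw [show p * P x / R x = p * (P x / R x) by ring,
            Real.logb_mul (ne_of_gt hpos) (ne_of_gt (div_pos hPx h))]
          ring
        have h2 : Real.logb 2 (p * P x / R x) ≤ (p * P x / R x - 1) / Real.log 2 := by
          rw [Real.logb, div_le_div_iff_of_pos_right hlog2]
          exact Real.log_le_sub_one_of_pos (by positivity)
        calc R x * Real.logb 2 (P x / R x)
            = R x * Real.logb 2 (p * P x / R x) - R x * Real.logb 2 p := by rw [h1]; ring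
          _ ≤ R x * ((p * P x / R x - 1) / Real.log 2) - R x * Real.logb 2 p := by
              have := mul_le_mul_of_nonneg_left h2 (le_of_lt h)
              linarith
          _ = (p * P x - R x) / Real.log 2 - R x * Real.logb 2 p := by
              field_simp
      · simp [h]
    calc (∑ x, if 0 < R x then R x * Real.logb 2 (P x / R x) else 0)
        ≤ ∑ x, ((if 0 < R x then (p * P x - R x) / Real.log 2 else 0)
          - (if 0 < R x then R x else 0) * Real.logb 2 p) := Finset.sum_le_sum key
      _ = (∑ x, if 0 < R x then (p * P x - R x) / Real.log 2 else 0)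
          - (∑ x, if 0 < R x then R x else 0) * Real.logb 2 p := by
          rw [Finset.sum_sub_distrib, Finset.sum_mul]
      _ ≤ 0 - p * Real.logb 2 p := by
          have hsumR : (∑ x, if 0 < R x then R x else 0) = p := by
            rw [hp]
            apply Finset.sum_congr rfl
            intro x _
            by_cases h : 0 < R x
            · simp [h]
            · simp [h, le_antisymm (not_lt.mp h) (hR x)]
          rw [hsumR]
          have h1 : (∑ x, if 0 < R x then (p * P x - R x) / Real.log 2 else 0) ≤ 0 := by
            have : (∑ x, if 0 < R x then (p * P x - R x) / Real.log 2 else 0)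
                = (∑ x, if 0 < R x then p * P x - R x else 0) / Real.log 2 := by
              rw [Finset.sum_div]
              exact Finset.sum_congr rfl fun x _ => by split <;> simp
            rw [this]
            apply div_nonpos_of_nonpos_of_nonneg _ (le_of_lt hlog2)
            have : (∑ x, if 0 < R x then p * P x - R x else 0)
                = (∑ x, if 0 < R x then p * P x else 0) - (∑ x, if 0 < R x then R x else 0) := by
              rw [← Finset.sum_sub_distrib]
              exact Finset.sum_congr rfl fun x _ => by split <;> simp
            rw [this, hsumR]
            have : (∑ x, if 0 < R x then p * P x else 0) ≤ p * 1 := by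
              rw [← hPsum, Finset.mul_sum]
              apply Finset.sum_le_sum
              intro x _
              split
              · exact le_rfl
              · exact mul_nonneg hpos.le (hPnn _)
            linarith
          linarith
      _ = -(p * Real.logb 2 p) := by ring


/-- **Relative-entropy decomposition bound.** If the pmf `P` splits as `P = P₁ + P₂` with
`P₁, P₂` nonnegative measures absolutely continuous w.r.t. the pmf `Q`, then
`d(P,Q) ≤ h(∑ P₁) + ∑_{P₁>0} P₁ log₂(P₁/Q) + ∑_{P₂>0} P₂ log₂(P₂/Q)`. -/
theorem klDiv_decomposition_bound {X : Type} [Fintype X]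
    (P Q P₁ P₂ : X → ℝ) (hP : IsPMF P) (hQ : IsPMF Q)
    (hPQ : ∀ x, Q x = 0 → P x = 0)
    (hP₁ : ∀ x, 0 ≤ P₁ x) (hP₂ : ∀ x, 0 ≤ P₂ x)
    (hsplit : ∀ x, P x = P₁ x + P₂ x)
    (hP₁Q : ∀ x, Q x = 0 → P₁ x = 0) (hP₂Q : ∀ x, Q x = 0 → P₂ x = 0) :
    klDiv P Q ≤ binEnt (∑ x, P₁ x)
      + (∑ x, if 0 < P₁ x then P₁ x * Real.logb 2 (P₁ x / Q x) else 0)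
      + (∑ x, if 0 < P₂ x then P₂ x * Real.logb 2 (P₂ x / Q x) else 0) := by
  obtain ⟨hPnn, hPsum⟩ := hP
  obtain ⟨hQnn, hQsum⟩ := hQ
  have hP₂sum : ∑ x, P₂ x = 1 - ∑ x, P₁ x := by
    have h : ∑ x, P₂ x = ∑ x, (P x - P₁ x) :=
      Finset.sum_congr rfl fun x _ => by rw [hsplit x]; ring
    rw [h, Finset.sum_sub_distrib, hPsum]
  have hdecomp : klDiv P Q
      = (∑ x, if 0 < P₁ x then P₁ x * Real.logb 2 (P₁ x / Q x) else 0)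
      + (∑ x, if 0 < P₂ x then P₂ x * Real.logb 2 (P₂ x / Q x) else 0)
      + ((∑ x, if 0 < P₁ x then P₁ x * Real.logb 2 (P x / P₁ x) else 0)
      + (∑ x, if 0 < P₂ x then P₂ x * Real.logb 2 (P x / P₂ x) else 0)) := by
    unfold klDiv
    rw [← Finset.sum_add_distrib, ← Finset.sum_add_distrib, ← Finset.sum_add_distrib]
    apply Finset.sum_congr rfl
    intro x _
    by_cases hPx : 0 < P x
    · have hQx : 0 < Q x := by
        rcases lt_or_eq_of_le (hQnn x) with h | h
        · exact h
        · exact absurd (hPQ x h.symm) (ne_of_gt hPx)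
      have key : ∀ (R : X → ℝ), (∀ y, 0 ≤ R y) → R x ≤ P x →
          (if 0 < R x then R x * Real.logb 2 (R x / Q x) else 0)
          + (if 0 < R x then R x * Real.logb 2 (P x / R x) else 0)
          = R x * Real.logb 2 (P x / Q x) := by
        intro R hRnn hRle
        by_cases hR : 0 < R x
        · simp only [hR, if_pos]
          rw [show P x / Q x = (R x / Q x) * (P x / R x) by field_simp,
            Real.logb_mul (by positivity) (by positivity)]
          ring
        · have h0 : R x = 0 := le_antisymm (not_lt.mp hR) (hRnn x)
          simp [hR, h0]
      have h1 := key P₁ hP₁ (by rw [hsplit x]; linarith [hP₂ x])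
      have h2 := key P₂ hP₂ (by rw [hsplit x]; linarith [hP₁ x])
      rw [if_pos hPx]
      linear_combination (hsplit x) * Real.logb 2 (P x / Q x) - h1 - h2
    · have h0 : P x = 0 := le_antisymm (not_lt.mp hPx) (hPnn x)
      have h1 : P₁ x = 0 := by have := hsplit x; nlinarith [hP₁ x, hP₂ x]
      have h2 : P₂ x = 0 := by have := hsplit x; nlinarith [hP₁ x, hP₂ x]
      simp [hPx, h1, h2]
  have b1 := aux_jensen P P₁ hP₁ (fun y => by rw [hsplit y]; linarith [hP₂ y]) hPsum
  have b2 := aux_jensen P P₂ hP₂ (fun y => by rw [hsplit y]; linarith [hP₁ y]) hPsum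
  rw [hP₂sum] at b2
  rw [hdecomp, binEnt]
  linarith
end

section
/- High-probability bound on the atypical mass of the induced distribution: Fix ε > 0 and β₁ > 0, and suppose the probability under the n-fold product Q_{U,V}^n that (U^n, V^n) ∉ A_ε is at most 2^{−β₁ n}. Then the probability (over the i.i.d. draw of the codebook 𝒞) that ∑_{v^n} P_{𝒞,2}(v^n) ≥ 2 · 2^{−β₁ n} is at most exp(−(1/3) 2^{n(R − β₁)}). -/
open scoped BigOperators Classical
open Finset

section Aux

/-- Convexity: `2^t ≤ 1 + t` on `[0,1]`. -/
lemma two_rpow_le_one_add {t : ℝ} (h0 : 0 ≤ t) (h1 : t ≤ 1) : (2:ℝ) ^ t ≤ 1 + t := by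
  have h := convexOn_exp.2 (Set.mem_univ (0:ℝ)) (Set.mem_univ (Real.log 2))
    (by linarith : (0:ℝ) ≤ 1 - t) h0 (by ring)
  simp only [smul_eq_mul, mul_zero, zero_add, Real.exp_zero, mul_one,
    Real.exp_log (by norm_num : (0:ℝ) < 2)] at h
  rw [Real.rpow_def_of_pos (by norm_num : (0:ℝ) < 2)]
  have he : Real.log 2 * t = t * Real.log 2 := mul_comm _ _
  rw [he]
  linarith

lemma two_rpow_sum {ι : Type*} (s : Finset ι) (f : ι → ℝ) :
    (2:ℝ) ^ (∑ i ∈ s, f i) = ∏ i ∈ s, (2:ℝ) ^ (f i) := by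
  rw [Real.rpow_def_of_pos (by norm_num : (0:ℝ) < 2), Finset.mul_sum, Real.exp_sum]
  exact Finset.prod_congr rfl fun i _ =>
    (Real.rpow_def_of_pos (by norm_num : (0:ℝ) < 2) _).symm

end Aux

/-- **High-probability bound on the atypical mass.** If the atypicality probability is at
most `2^{-β₁ n}`, then the probability over the codebook draw that
`∑_{v^n} P_{𝒞,2}(v^n) ≥ 2·2^{-β₁ n}` is at most `exp(−(1/3) 2^{n(R−β₁)})`. -/
theorem atypical_mass_high_prob {U V : Type} [Fintype U] [Fintype V]
    (Q : U → ℝ) (W : U → V → ℝ) (hQ : IsPMF Q) (hW : ∀ u, IsPMF (W u))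
    (R : ℝ) (hR0 : 0 < R) (ε : ℝ) (hε : 0 < ε) (β₁ : ℝ) (hβ₁ : 0 < β₁) (n : ℕ)
    (hatyp : atypProb Q W n ε ≤ (2 : ℝ) ^ (-(β₁ * n))) :
    cbP Q n ⌈(2 : ℝ) ^ ((n : ℝ) * R)⌉₊
      (fun C =>
        2 * (2 : ℝ) ^ (-(β₁ * n)) ≤
          ∑ y : Fin n → V, PC2 Q W n ⌈(2 : ℝ) ^ ((n : ℝ) * R)⌉₊ ε C y)
      ≤ Real.exp (-(1 / 3) * (2 : ℝ) ^ ((n : ℝ) * (R - β₁))) := by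
  classical
  set M : ℕ := ⌈(2 : ℝ) ^ ((n : ℝ) * R)⌉₊ with hMdef
  have h2pos : (0:ℝ) < 2 := by norm_num
  have hMreal : (2:ℝ) ^ ((n : ℝ) * R) ≤ (M : ℝ) := Nat.le_ceil _
  have hMpos : (0:ℝ) < (M : ℝ) := lt_of_lt_of_le (Real.rpow_pos_of_pos h2pos _) hMreal
  set p : ℝ := (2:ℝ) ^ (-(β₁ * n)) with hpdef
  have hp0 : 0 < p := Real.rpow_pos_of_pos h2pos _
  set T : (Fin n → U) → ℝ := fun x => ∑ y : Fin n → V,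
      if (x, y) ∉ typicalSet Q W n ε then prodChannel W n x y else 0 with hTdef
  have hch0 : ∀ (x : Fin n → U) (y : Fin n → V), 0 ≤ prodChannel W n x y := fun x y =>
    Finset.prod_nonneg fun i _ => (hW (x i)).1 (y i)
  have hT0 : ∀ x, 0 ≤ T x := fun x =>
    Finset.sum_nonneg fun y _ => by split <;> [exact hch0 x y; exact le_rfl]
  have hch1 : ∀ x : Fin n → U, ∑ y : Fin n → V, prodChannel W n x y = 1 := by
    intro x
    have := (Fintype.prod_sum (fun (i : Fin n) (v : V) => W (x i) v)).symm
    simpa [prodChannel, (hW _).2] using this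
  have hT1 : ∀ x, T x ≤ 1 := by
    intro x
    calc T x ≤ ∑ y : Fin n → V, prodChannel W n x y := by
          refine Finset.sum_le_sum fun y _ => ?_
          split
          · exact le_rfl
          · exact hch0 x y
      _ = 1 := hch1 x
  have hq0 : ∀ x : Fin n → U, 0 ≤ prodPMF Q n x := fun x =>
    Finset.prod_nonneg fun i _ => hQ.1 (x i)
  have hq1 : ∑ x : Fin n → U, prodPMF Q n x = 1 := by
    have := (Fintype.prod_sum (fun (_ : Fin n) (u : U) => Q u)).symm
    simpa [prodPMF, hQ.2] using this
  have hμ : ∑ x : Fin n → U, prodPMF Q n x * T x = atypProb Q W n ε := by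
    unfold atypProb
    refine Finset.sum_congr rfl fun x _ => ?_
    rw [hTdef, Finset.mul_sum]
    refine Finset.sum_congr rfl fun y _ => ?_
    split
    · simp [prodPMF, prodChannel, Finset.prod_mul_distrib]
    · simp
  -- expectation of 2^T
  have hE : ∑ x : Fin n → U, prodPMF Q n x * (2:ℝ) ^ (T x) ≤ Real.exp p := by
    calc ∑ x : Fin n → U, prodPMF Q n x * (2:ℝ) ^ (T x)
        ≤ ∑ x : Fin n → U, prodPMF Q n x * (1 + T x) := by
          refine Finset.sum_le_sum fun x _ => ?_
          exact mul_le_mul_of_nonneg_left (two_rpow_le_one_add (hT0 x) (hT1 x)) (hq0 x)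
      _ = 1 + atypProb Q W n ε := by
          simp only [mul_add, Finset.sum_add_distrib, mul_one, hq1, hμ]
      _ ≤ 1 + p := by linarith
      _ ≤ Real.exp p := by linarith [Real.add_one_le_exp p]
  have hE0 : 0 ≤ ∑ x : Fin n → U, prodPMF Q n x * (2:ℝ) ^ (T x) :=
    Finset.sum_nonneg fun x _ => mul_nonneg (hq0 x) (Real.rpow_nonneg (by norm_num) _)
  set a : ℝ := 2 * (M : ℝ) * p with hadef
  have hcb0 : ∀ C : Fin M → Fin n → U, 0 ≤ cbProb Q n M C := fun C =>
    Finset.prod_nonneg fun m _ => hq0 (C m)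
  -- sum of PC2 equals M⁻¹ * ∑ T
  have hsumPC2 : ∀ C : Fin M → Fin n → U,
      ∑ y : Fin n → V, PC2 Q W n M ε C y = (M:ℝ)⁻¹ * ∑ m, T (C m) := by
    intro C
    unfold PC2
    rw [← Finset.mul_sum, Finset.sum_comm]
  -- Chernoff / Markov step
  have step1 : cbP Q n M (fun C => 2 * p ≤ ∑ y : Fin n → V, PC2 Q W n M ε C y)
      ≤ ∑ C : Fin M → Fin n → U, cbProb Q n M C * (2:ℝ) ^ ((∑ m, T (C m)) - a) := by
    unfold cbP
    refine Finset.sum_le_sum fun C _ => ?_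
    split
    · rename_i hev
      rw [hsumPC2 C] at hev
      have hS : a ≤ ∑ m, T (C m) := by
        have hne : (M:ℝ) ≠ 0 := ne_of_gt hMpos
        have h2 := mul_le_mul_of_nonneg_left hev hMpos.le
        rw [mul_inv_cancel_left₀ hne] at h2
        rw [hadef]; nlinarith
      have h1 : (1:ℝ) ≤ (2:ℝ) ^ ((∑ m, T (C m)) - a) :=
        Real.one_le_rpow (by norm_num) (by linarith)
      nlinarith [hcb0 C]
    · exact mul_nonneg (hcb0 C) (Real.rpow_nonneg (by norm_num) _)
  -- factorize
  have step2 : ∑ C : Fin M → Fin n → U, cbProb Q n M C * (2:ℝ) ^ ((∑ m, T (C m)) - a)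
      = (2:ℝ) ^ (-a) * (∑ x : Fin n → U, prodPMF Q n x * (2:ℝ) ^ (T x)) ^ M := by
    have hfac : ∀ C : Fin M → Fin n → U,
        cbProb Q n M C * (2:ℝ) ^ ((∑ m, T (C m)) - a)
        = (2:ℝ) ^ (-a) * ∏ m, (prodPMF Q n (C m) * (2:ℝ) ^ (T (C m))) := by
      intro C
      rw [sub_eq_add_neg, Real.rpow_add h2pos, two_rpow_sum, cbProb,
        Finset.prod_mul_distrib]
      ring
    rw [Finset.sum_congr rfl fun C _ => hfac C, ← Finset.mul_sum]
    congr 1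
    rw [← Fintype.prod_sum (fun (_ : Fin M) (x : Fin n → U) =>
      prodPMF Q n x * (2:ℝ) ^ (T x))]
    simp [Finset.prod_const]
  -- combine
  have hMp : (2:ℝ) ^ ((n : ℝ) * (R - β₁)) ≤ (M:ℝ) * p := by
    have : (n : ℝ) * (R - β₁) = (n : ℝ) * R + (-(β₁ * n)) := by ring
    rw [this, Real.rpow_add h2pos]
    exact mul_le_mul_of_nonneg_right hMreal hp0.le
  have hlog2 : (0.6931471803 : ℝ) < Real.log 2 := Real.log_two_gt_d9
  have step3 : (2:ℝ) ^ (-a) * (∑ x : Fin n → U, prodPMF Q n x * (2:ℝ) ^ (T x)) ^ M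
      ≤ Real.exp (-(1 / 3) * (2 : ℝ) ^ ((n : ℝ) * (R - β₁))) := by
    have hpow : (∑ x : Fin n → U, prodPMF Q n x * (2:ℝ) ^ (T x)) ^ M
        ≤ Real.exp ((M:ℝ) * p) := by
      calc (∑ x : Fin n → U, prodPMF Q n x * (2:ℝ) ^ (T x)) ^ M
          ≤ (Real.exp p) ^ M := pow_le_pow_left₀ hE0 hE M
        _ = Real.exp ((M:ℝ) * p) := by rw [← Real.exp_nat_mul]
    have h2a : (2:ℝ) ^ (-a) = Real.exp (Real.log 2 * (-a)) :=
      Real.rpow_def_of_pos h2pos _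
    calc (2:ℝ) ^ (-a) * (∑ x : Fin n → U, prodPMF Q n x * (2:ℝ) ^ (T x)) ^ M
        ≤ (2:ℝ) ^ (-a) * Real.exp ((M:ℝ) * p) := by
          exact mul_le_mul_of_nonneg_left hpow (Real.rpow_nonneg (by norm_num) _)
      _ = Real.exp (Real.log 2 * (-a) + (M:ℝ) * p) := by
          rw [h2a, ← Real.exp_add]
      _ ≤ Real.exp (-(1 / 3) * (2 : ℝ) ^ ((n : ℝ) * (R - β₁))) := by
          apply Real.exp_le_exp.mpr
          have hMp0 : 0 < (M:ℝ) * p := mul_pos hMpos hp0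
          have key : Real.log 2 * (-a) + (M:ℝ) * p ≤ -(1/3) * ((M:ℝ) * p) := by
            rw [hadef]; nlinarith
          calc Real.log 2 * (-a) + (M:ℝ) * p ≤ -(1/3) * ((M:ℝ) * p) := key
            _ ≤ -(1 / 3) * (2 : ℝ) ^ ((n : ℝ) * (R - β₁)) := by nlinarith
  calc cbP Q n M (fun C => 2 * p ≤ ∑ y : Fin n → V, PC2 Q W n M ε C y)
      ≤ ∑ C : Fin M → Fin n → U, cbProb Q n M C * (2:ℝ) ^ ((∑ m, T (C m)) - a) := step1
    _ = (2:ℝ) ^ (-a) * (∑ x : Fin n → U, prodPMF Q n x * (2:ℝ) ^ (T x)) ^ M := step2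
    _ ≤ Real.exp (-(1 / 3) * (2 : ℝ) ^ ((n : ℝ) * (R - β₁))) := step3
end

section
/- Pointwise high-probability bound on the typical density: Fix ε > 0, β₂ > 0, and v^n ∈ 𝒱^n with Q_{V^n}(v^n) > 0. Then the probability (over the i.i.d. draw of the codebook 𝒞) that D_{𝒞,1}(v^n) ≥ 1 + 2^{−β₂ n} is at most exp(−(1/3) 2^{n(R − I_Q(U;V) − ε − 2β₂)}). -/
open scoped BigOperators Classical
open Finset

section AuxChernoff

lemma ratio_le_of_typical {U V : Type} [Fintype U] [Fintype V]
    (Q : U → ℝ) (W : U → V → ℝ) (n : ℕ) (ε : ℝ) (x : Fin n → U) (y : Fin n → V)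
    (hx : (x, y) ∈ typicalSet Q W n ε) :
    prodChannel W n x y / prodPMF (outputMarginal Q W) n y
      ≤ (2 : ℝ) ^ ((n : ℝ) * (mutualInfo Q W + ε)) := by
  set r := prodChannel W n x y / prodPMF (outputMarginal Q W) n y with hr
  by_cases hn : n = 0
  · subst hn
    have : r = 1 := by simp [hr, prodChannel, prodPMF]
    rw [this]
    norm_num
  · have hn' : (0 : ℝ) < n := by positivity
    have hx' : (1 / (n : ℝ)) * Real.logb 2 r ≤ mutualInfo Q W + ε := hx
    have hlog : Real.logb 2 r ≤ (n : ℝ) * (mutualInfo Q W + ε) := by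
      rw [one_div, inv_mul_le_iff₀ hn'] at hx'
      exact hx'
    by_cases hr0 : 0 < r
    · exact (Real.logb_le_iff_le_rpow (by norm_num) hr0).1 hlog
    · push_neg at hr0
      exact hr0.trans (Real.rpow_pos_of_pos (by norm_num) _).le

lemma sum_pi_prod' {Ω : Type} [Fintype Ω] (n : ℕ) (g : Fin n → Ω → ℝ) :
    ∑ x : Fin n → Ω, ∏ i, g i (x i) = ∏ i, ∑ u, g i u := by
  rw [Finset.prod_univ_sum, Fintype.piFinset_univ]

lemma sum_pi_prod {Ω : Type} [Fintype Ω] (M : ℕ) (h : Ω → ℝ) :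
    ∑ C : Fin M → Ω, ∏ m, h (C m) = (∑ x, h x) ^ M := by
  rw [sum_pi_prod']
  simp

lemma exp_quad {x : ℝ} (h0 : 0 ≤ x) (h1 : x ≤ 1) :
    Real.exp x ≤ 1 + x + (3 / 4) * x ^ 2 := by
  have h := Real.exp_bound (x := x) (by rwa [abs_of_nonneg h0]) (n := 2) (by norm_num)
  simp only [Finset.sum_range_succ, Finset.sum_range_zero, abs_of_nonneg h0] at h
  norm_num at h
  have := abs_le.1 h
  nlinarith [this.2]

lemma exp_convex_bound {f s : ℝ} (hf0 : 0 ≤ f) (hf1 : f ≤ 1) :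
    Real.exp (s * f) ≤ 1 + f * (Real.exp s - 1) := by
  have h := convexOn_exp.2 (Set.mem_univ (0:ℝ)) (Set.mem_univ s)
    (by linarith : (0:ℝ) ≤ 1 - f) hf0 (by ring)
  simp only [smul_eq_mul, mul_zero, zero_add, Real.exp_zero, mul_one] at h
  calc Real.exp (s * f) = Real.exp ((1-f) * 0 + f * s) := by ring_nf
    _ ≤ (1-f) * 1 + f * Real.exp s := by simpa using h
    _ = 1 + f * (Real.exp s - 1) := by ring

end AuxChernoff

/-- **Pointwise high-probability bound on the typical density.** For fixed `v^n` in the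
support of `Q_{V^n}`, the probability over the codebook draw that
`D_{𝒞,1}(v^n) ≥ 1 + 2^{-β₂ n}` is at most `exp(−(1/3) 2^{n(R−I_Q(U;V)−ε−2β₂)})`. -/
theorem typical_density_high_prob {U V : Type} [Fintype U] [Fintype V]
    (Q : U → ℝ) (W : U → V → ℝ) (hQ : IsPMF Q) (hW : ∀ u, IsPMF (W u))
    (R : ℝ) (hR0 : 0 < R) (ε : ℝ) (hε : 0 < ε) (β₂ : ℝ) (hβ₂ : 0 < β₂) (n : ℕ)
    (y : Fin n → V) (hy : 0 < prodPMF (outputMarginal Q W) n y) :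
    cbP Q n ⌈(2 : ℝ) ^ ((n : ℝ) * R)⌉₊
      (fun C => 1 + (2 : ℝ) ^ (-(β₂ * n)) ≤ DC1 Q W n ⌈(2 : ℝ) ^ ((n : ℝ) * R)⌉₊ ε C y)
      ≤ Real.exp (-(1 / 3) * (2 : ℝ) ^ ((n : ℝ) * (R - mutualInfo Q W - ε - 2 * β₂))) := by
  classical
  set M := ⌈(2 : ℝ) ^ ((n : ℝ) * R)⌉₊ with hMdef
  set I := mutualInfo Q W with hIdef
  set δ : ℝ := (2 : ℝ) ^ (-(β₂ * (n : ℝ))) with hδdef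
  set b : ℝ := (2 : ℝ) ^ ((n : ℝ) * (I + ε)) with hbdef
  set s : ℝ := (2 / 3) * δ with hsdef
  have hδ0 : 0 < δ := Real.rpow_pos_of_pos (by norm_num) _
  have hδ1 : δ ≤ 1 := Real.rpow_le_one_of_one_le_of_nonpos (by norm_num)
    (neg_nonpos.2 (by positivity))
  have hb0 : 0 < b := Real.rpow_pos_of_pos (by norm_num) _
  have hs0 : 0 < s := by positivity
  have hs1 : s ≤ 1 := by nlinarith
  have hM0 : 0 < M := Nat.ceil_pos.2 (Real.rpow_pos_of_pos (by norm_num) _)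
  have hM0' : (0 : ℝ) < (M : ℝ) := by exact_mod_cast hM0
  have hMR : (2 : ℝ) ^ ((n : ℝ) * R) ≤ (M : ℝ) := Nat.le_ceil _
  set qy := prodPMF (outputMarginal Q W) n y with hqydef
  set X : (Fin n → U) → ℝ := fun x =>
    if (x, y) ∈ typicalSet Q W n ε then prodChannel W n x y / qy else 0 with hXdef
  set p : (Fin n → U) → ℝ := prodPMF Q n with hpdef
  have hch0 : ∀ x : Fin n → U, 0 ≤ prodChannel W n x y := fun x =>
    Finset.prod_nonneg fun i _ => (hW (x i)).1 (y i)
  have hp0 : ∀ x, 0 ≤ p x := fun x => Finset.prod_nonneg fun i _ => hQ.1 (x i)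
  have hp1 : ∑ x, p x = 1 := by
    rw [hpdef, show (fun x => prodPMF Q n x) = fun x : Fin n → U => ∏ i, Q (x i) from rfl]
    rw [sum_pi_prod n Q, hQ.2, one_pow]
  have hX0 : ∀ x, 0 ≤ X x := by
    intro x
    simp only [hXdef]
    split
    · exact div_nonneg (hch0 x) hy.le
    · exact le_refl 0
  have hXb : ∀ x, X x ≤ b := by
    intro x
    simp only [hXdef]
    split
    · exact ratio_le_of_typical Q W n ε x y (by assumption)
    · exact hb0.le
  have hμ : ∑ x, p x * X x ≤ 1 := by
    have h1 : ∀ x, p x * X x ≤ p x * (prodChannel W n x y / qy) := by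
      intro x
      apply mul_le_mul_of_nonneg_left _ (hp0 x)
      simp only [hXdef]
      split
      · exact le_refl _
      · exact div_nonneg (hch0 x) hy.le
    have h2 : ∑ x, p x * (prodChannel W n x y / qy) = 1 := by
      have : ∑ x, p x * prodChannel W n x y = qy := by
        have e1 : ∀ x : Fin n → U, p x * prodChannel W n x y
            = ∏ i, (Q (x i) * W (x i) (y i)) := by
          intro x
          rw [hpdef]
          simp [prodPMF, prodChannel, Finset.prod_mul_distrib]
        simp_rw [e1]
        rw [sum_pi_prod' n (fun i u => Q u * W u (y i))]
        rfl
      simp_rw [← mul_div_assoc]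
      rw [← Finset.sum_div, this, div_self hy.ne']
    calc ∑ x, p x * X x ≤ ∑ x, p x * (prodChannel W n x y / qy) :=
          Finset.sum_le_sum fun x _ => h1 x
      _ = 1 := h2
  -- the exponential tilt
  set g : (Fin n → U) → ℝ := fun x => p x * Real.exp (s / b * X x) with hgdef
  have hcb0 : ∀ C : Fin M → Fin n → U, 0 ≤ cbProb Q n M C := fun C =>
    Finset.prod_nonneg fun m _ => hp0 (C m)
  have hT : ∀ C : Fin M → Fin n → U,
      DC1 Q W n M ε C y = (M : ℝ)⁻¹ * ∑ m, X (C m) := by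
    intro C
    show PC1 Q W n M ε C y / qy = _
    rw [PC1, mul_div_assoc, Finset.sum_div]
    congr 1
    refine Finset.sum_congr rfl fun m _ => ?_
    rw [hXdef]
    simp only [apply_ite (fun z : ℝ => z / qy), zero_div]
  have step1 : cbP Q n M (fun C => 1 + δ ≤ DC1 Q W n M ε C y)
      ≤ Real.exp (-(s / b) * ((M : ℝ) * (1 + δ))) * (∑ x, g x) ^ M := by
    rw [cbP]
    calc ∑ C : Fin M → Fin n → U, (if 1 + δ ≤ DC1 Q W n M ε C y then cbProb Q n M C else 0)
        ≤ ∑ C : Fin M → Fin n → U,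
            cbProb Q n M C * Real.exp (s / b * (∑ m, X (C m) - (M : ℝ) * (1 + δ))) := by
          refine Finset.sum_le_sum fun C _ => ?_
          split_ifs with hEv
          · have hTC : (M : ℝ) * (1 + δ) ≤ ∑ m, X (C m) := by
              rw [hT C] at hEv
              have := mul_le_mul_of_nonneg_left hEv hM0'.le
              rwa [← mul_assoc, mul_inv_cancel₀ hM0'.ne', one_mul] at this
            have : (1 : ℝ) ≤ Real.exp (s / b * (∑ m, X (C m) - (M : ℝ) * (1 + δ))) := by
              have hsb : 0 ≤ s / b := by positivity
              have h9 := mul_nonneg hsb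
                (by linarith : (0:ℝ) ≤ ∑ m, X (C m) - (M : ℝ) * (1 + δ))
              have h8 := Real.add_one_le_exp (s / b * (∑ m, X (C m) - (M : ℝ) * (1 + δ)))
              linarith
            exact le_mul_of_one_le_right (hcb0 C) this
          · exact mul_nonneg (hcb0 C) (Real.exp_nonneg _)
      _ = Real.exp (-(s / b) * ((M : ℝ) * (1 + δ))) *
            ∑ C : Fin M → Fin n → U, ∏ m, g (C m) := by
          rw [Finset.mul_sum]
          refine Finset.sum_congr rfl fun C _ => ?_
          have hprod : ∏ m, g (C m) = cbProb Q n M C * Real.exp (s / b * ∑ m, X (C m)) := by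
            simp only [hgdef]
            rw [Finset.prod_mul_distrib, ← Real.exp_sum, ← Finset.mul_sum]
            rfl
          rw [hprod,
            show s / b * (∑ m, X (C m) - (M : ℝ) * (1 + δ))
              = -(s / b) * ((M : ℝ) * (1 + δ)) + s / b * ∑ m, X (C m) by ring,
            Real.exp_add]
          ring
      _ = Real.exp (-(s / b) * ((M : ℝ) * (1 + δ))) * (∑ x, g x) ^ M := by
          rw [sum_pi_prod]
  have step2 : ∑ x, g x ≤ Real.exp ((Real.exp s - 1) / b) := by
    have h1 : ∀ x, g x ≤ p x * (1 + X x / b * (Real.exp s - 1)) := by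
      intro x
      apply mul_le_mul_of_nonneg_left _ (hp0 x)
      have := exp_convex_bound (f := X x / b) (s := s)
        (div_nonneg (hX0 x) hb0.le) ((div_le_one hb0).2 (hXb x))
      calc Real.exp (s / b * X x) = Real.exp (s * (X x / b)) := by
            rw [div_mul_eq_mul_div, mul_div_assoc]
        _ ≤ 1 + X x / b * (Real.exp s - 1) := this
    have hes : 0 ≤ Real.exp s - 1 := by
      have := Real.add_one_le_exp s
      linarith
    calc ∑ x, g x ≤ ∑ x, p x * (1 + X x / b * (Real.exp s - 1)) :=
          Finset.sum_le_sum fun x _ => h1 x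
      _ = 1 + (Real.exp s - 1) / b * ∑ x, p x * X x := by
          simp_rw [mul_add, mul_one, Finset.sum_add_distrib, hp1, Finset.mul_sum]
          congr 1
          refine Finset.sum_congr rfl fun x _ => ?_
          field_simp
      _ ≤ 1 + (Real.exp s - 1) / b := by
          have hc : 0 ≤ (Real.exp s - 1) / b := div_nonneg hes hb0.le
          nlinarith [hμ, hc]
      _ ≤ Real.exp ((Real.exp s - 1) / b) := by
          have := Real.add_one_le_exp ((Real.exp s - 1) / b)
          linarith
  have step3 : Real.exp (-(s / b) * ((M : ℝ) * (1 + δ))) * (∑ x, g x) ^ M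
      ≤ Real.exp ((M : ℝ) / b * (Real.exp s - 1 - s * (1 + δ))) := by
    have hg0 : 0 ≤ ∑ x, g x :=
      Finset.sum_nonneg fun x _ => mul_nonneg (hp0 x) (Real.exp_nonneg _)
    have h1 : (∑ x, g x) ^ M ≤ Real.exp ((Real.exp s - 1) / b) ^ M :=
      pow_le_pow_left₀ hg0 step2 M
    have h2 : Real.exp ((Real.exp s - 1) / b) ^ M
        = Real.exp ((M : ℝ) * ((Real.exp s - 1) / b)) := by
      rw [← Real.exp_nat_mul]
    calc Real.exp (-(s / b) * ((M : ℝ) * (1 + δ))) * (∑ x, g x) ^ M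
        ≤ Real.exp (-(s / b) * ((M : ℝ) * (1 + δ))) *
            Real.exp ((M : ℝ) * ((Real.exp s - 1) / b)) := by
          rw [← h2]
          exact mul_le_mul_of_nonneg_left h1 (Real.exp_nonneg _)
      _ = Real.exp ((M : ℝ) / b * (Real.exp s - 1 - s * (1 + δ))) := by
          rw [← Real.exp_add]
          congr 1
          field_simp
          ring
  have hE : Real.exp s - 1 - s * (1 + δ) ≤ -(1 / 3) * δ ^ 2 := by
    have h := exp_quad hs0.le hs1
    rw [hsdef] at h ⊢
    nlinarith [h, sq_nonneg δ]
  have step4 : (M : ℝ) / b * (Real.exp s - 1 - s * (1 + δ))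
      ≤ -(1 / 3) * (2 : ℝ) ^ ((n : ℝ) * (R - I - ε - 2 * β₂)) := by
    have hMb : (2 : ℝ) ^ ((n : ℝ) * (R - I - ε)) ≤ (M : ℝ) / b := by
      have e1 : (n : ℝ) * (R - I - ε) = (n : ℝ) * R - (n : ℝ) * (I + ε) := by ring
      rw [e1, Real.rpow_sub (by norm_num : (0:ℝ) < 2)]
      rw [hbdef]
      gcongr
    have hMb0 : 0 ≤ (M : ℝ) / b := div_nonneg hM0'.le hb0.le
    have hfin : (2 : ℝ) ^ ((n : ℝ) * (R - I - ε)) * (-(1 / 3) * δ ^ 2)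
        = -(1 / 3) * (2 : ℝ) ^ ((n : ℝ) * (R - I - ε - 2 * β₂)) := by
      have e2 : (n : ℝ) * (R - I - ε - 2 * β₂)
          = (n : ℝ) * (R - I - ε) + (-(β₂ * (n : ℝ)) + -(β₂ * (n : ℝ))) := by ring
      rw [e2, Real.rpow_add (by norm_num : (0:ℝ) < 2),
        Real.rpow_add (by norm_num : (0:ℝ) < 2), hδdef]
      ring
    calc (M : ℝ) / b * (Real.exp s - 1 - s * (1 + δ))
        ≤ (M : ℝ) / b * (-(1 / 3) * δ ^ 2) := mul_le_mul_of_nonneg_left hE hMb0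
      _ ≤ (2 : ℝ) ^ ((n : ℝ) * (R - I - ε)) * (-(1 / 3) * δ ^ 2) := by
          apply mul_le_mul_of_nonpos_right hMb
          have h7 : (0:ℝ) ≤ δ ^ 2 := sq_nonneg δ
          linarith
      _ = -(1 / 3) * (2 : ℝ) ^ ((n : ℝ) * (R - I - ε - 2 * β₂)) := hfin
  calc cbP Q n M (fun C => 1 + δ ≤ DC1 Q W n M ε C y)
      ≤ Real.exp (-(s / b) * ((M : ℝ) * (1 + δ))) * (∑ x, g x) ^ M := step1
    _ ≤ Real.exp ((M : ℝ) / b * (Real.exp s - 1 - s * (1 + δ))) := step3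
    _ ≤ Real.exp (-(1 / 3) * (2 : ℝ) ^ ((n : ℝ) * (R - I - ε - 2 * β₂))) :=
        Real.exp_le_exp.2 step4
end

section
/- Union bound on bad codebooks: Fix ε > 0, β₁ > 0, and β₂ > 0, and suppose the probability under the n-fold product Q_{U,V}^n that (U^n, V^n) ∉ A_ε is at most 2^{−β₁ n}. Let 𝒮 be the set of codebooks 𝒞 such that (i) ∑_{v^n} P_{𝒞,2}(v^n) < 2 · 2^{−β₁ n}, (ii) D_{𝒞,1}(v^n) < 1 + 2^{−β₂ n} for all v^n with Q_{V^n}(v^n) > 0, and (iii) D_{𝒞,2}(v^n) < (max_{v : Q_V(v) > 0} 1/Q_V(v))^n for all v^n with Q_{V^n}(v^n) > 0. Then the probability (over the i.i.d. draw of the codebook) that 𝒞 ∉ 𝒮 is at most exp(−(1/3) 2^{n(R − β₁)}) + |𝒱|^n exp(−(1/3) 2^{n(R − I_Q(U;V) − ε − 2β₂)}). -/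
open scoped BigOperators Classical
open Finset

set_option linter.unusedSectionVars false
section Aux

open Real

variable {U V : Type} [Fintype U] [Fintype V]

lemma pmf_nonneg {X : Type} [Fintype X] {P : X → ℝ} (h : IsPMF P) (x : X) : 0 ≤ P x := h.1 x

lemma pmf_le_one {X : Type} [Fintype X] {P : X → ℝ} (h : IsPMF P) (x : X) : P x ≤ 1 := by
  rw [← h.2]
  exact Finset.single_le_sum (fun i _ => h.1 i) (Finset.mem_univ x)

lemma prodPMF_nonneg {Q : U → ℝ} (hQ : ∀ u, 0 ≤ Q u) (n : ℕ) (x : Fin n → U) :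
    0 ≤ prodPMF Q n x :=
  Finset.prod_nonneg fun i _ => hQ (x i)

lemma isPMF_prodPMF {Q : U → ℝ} (hQ : IsPMF Q) (n : ℕ) : IsPMF (prodPMF Q n) := by
  constructor
  · exact prodPMF_nonneg hQ.1 n
  · have : ∑ x : Fin n → U, ∏ i, Q (x i) = ∏ _i : Fin n, ∑ u, Q u :=
      (Fintype.prod_sum (fun (_ : Fin n) (u : U) => Q u)).symm
    simpa [prodPMF, hQ.2] using this

lemma prodChannel_nonneg {W : U → V → ℝ} (hW : ∀ u, IsPMF (W u)) (n : ℕ)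
    (x : Fin n → U) (y : Fin n → V) : 0 ≤ prodChannel W n x y :=
  Finset.prod_nonneg fun i _ => (hW (x i)).1 (y i)

lemma prodChannel_le_one {W : U → V → ℝ} (hW : ∀ u, IsPMF (W u)) (n : ℕ)
    (x : Fin n → U) (y : Fin n → V) : prodChannel W n x y ≤ 1 :=
  Finset.prod_le_one (fun i _ => (hW (x i)).1 (y i)) (fun i _ => pmf_le_one (hW (x i)) (y i))

lemma sum_prodChannel {W : U → V → ℝ} (hW : ∀ u, IsPMF (W u)) (n : ℕ) (x : Fin n → U) :
    ∑ y : Fin n → V, prodChannel W n x y = 1 := by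
  have : ∑ y : Fin n → V, ∏ i, W (x i) (y i) = ∏ i : Fin n, ∑ v, W (x i) v :=
    (Fintype.prod_sum (fun (i : Fin n) (v : V) => W (x i) v)).symm
  simp only [prodChannel]
  rw [this]
  simp [(fun i => (hW (x i)).2)]

lemma isPMF_outputMarginal {Q : U → ℝ} {W : U → V → ℝ} (hQ : IsPMF Q)
    (hW : ∀ u, IsPMF (W u)) : IsPMF (outputMarginal Q W) := by
  constructor
  · intro v
    exact Finset.sum_nonneg fun u _ => mul_nonneg (hQ.1 u) ((hW u).1 v)
  · unfold outputMarginal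
    rw [Finset.sum_comm]
    rw [← hQ.2]
    exact Finset.sum_congr rfl fun u _ => by
      rw [← Finset.mul_sum, (hW u).2, mul_one]

lemma sum_prodPMF_mul_prodChannel {Q : U → ℝ} {W : U → V → ℝ} (n : ℕ) (y : Fin n → V) :
    ∑ x : Fin n → U, prodPMF Q n x * prodChannel W n x y
      = prodPMF (outputMarginal Q W) n y := by
  have h1 : ∀ x : Fin n → U, prodPMF Q n x * prodChannel W n x y
      = ∏ i, Q (x i) * W (x i) (y i) := by
    intro x; rw [prodPMF, prodChannel, ← Finset.prod_mul_distrib]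
  have h2 : ∑ x : Fin n → U, ∏ i, Q (x i) * W (x i) (y i)
      = ∏ i : Fin n, ∑ u, Q u * W u (y i) :=
    (Fintype.prod_sum (fun (i : Fin n) (u : U) => Q u * W u (y i))).symm
  calc ∑ x : Fin n → U, prodPMF Q n x * prodChannel W n x y
      = ∑ x : Fin n → U, ∏ i, Q (x i) * W (x i) (y i) := Finset.sum_congr rfl fun x _ => h1 x
    _ = ∏ i : Fin n, ∑ u, Q u * W u (y i) := h2
    _ = prodPMF (outputMarginal Q W) n y := rfl

end Aux
set_option linter.unusedSectionVars false
section Aux2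

open Real

variable {U V : Type} [Fintype U] [Fintype V]

lemma klDiv_nonneg' {X : Type} [Fintype X] {P R : X → ℝ} (hP : IsPMF P)
    (hR0 : ∀ x, 0 ≤ R x) (hRsum : ∑ x, R x ≤ 1)
    (hPR : ∀ x, 0 < P x → 0 < R x) : 0 ≤ klDiv P R := by
  have hlog2 : (0:ℝ) < Real.log 2 := Real.log_pos one_lt_two
  have key : ∀ x, (P x - (if 0 < P x then R x else 0)) / Real.log 2
      ≤ (if 0 < P x then P x * Real.logb 2 (P x / R x) else 0) := by
    intro x
    by_cases hx : 0 < P x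
    · simp only [hx, if_pos]
      have hRx := hPR x hx
      have h1 : Real.log (R x / P x) ≤ R x / P x - 1 :=
        Real.log_le_sub_one_of_pos (div_pos hRx hx)
      have h2 : Real.log (P x / R x) = - Real.log (R x / P x) := by
        rw [← Real.log_inv]; congr 1; field_simp
      have h3 : (1 : ℝ) - R x / P x ≤ Real.log (P x / R x) := by
        rw [h2]; linarith
      have h4 : (P x - R x) / Real.log 2 ≤ P x * (Real.log (P x / R x) / Real.log 2) := by
        have hm : P x * (1 - R x / P x) ≤ P x * Real.log (P x / R x) :=
          mul_le_mul_of_nonneg_left h3 hx.le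
        have heq : P x * (1 - R x / P x) = P x - R x := by field_simp
        rw [heq] at hm
        rw [div_le_iff₀ hlog2]
        calc P x - R x ≤ P x * Real.log (P x / R x) := hm
          _ = P x * (Real.log (P x / R x) / Real.log 2) * Real.log 2 := by
              field_simp
      simpa [Real.logb] using h4
    · have : P x = 0 := le_antisymm (not_lt.1 hx) (hP.1 x)
      simp [hx, this]
  have hsum : ∑ x, (P x - (if 0 < P x then R x else 0)) / Real.log 2
      ≤ klDiv P R := by
    unfold klDiv
    exact Finset.sum_le_sum fun x _ => key x
  refine le_trans ?_ hsum
  rw [← Finset.sum_div]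
  apply div_nonneg _ hlog2.le
  rw [Finset.sum_sub_distrib, hP.2]
  have : ∑ x, (if 0 < P x then R x else 0) ≤ ∑ x, R x :=
    Finset.sum_le_sum fun x _ => by split <;> simp [hR0 x]
  linarith

lemma mutualInfo_nonneg {Q : U → ℝ} {W : U → V → ℝ} (hQ : IsPMF Q)
    (hW : ∀ u, IsPMF (W u)) : 0 ≤ mutualInfo Q W := by
  have hQV := isPMF_outputMarginal hQ hW
  apply klDiv_nonneg'
  · constructor
    · intro p; exact mul_nonneg (hQ.1 p.1) ((hW p.1).1 p.2)
    · rw [Fintype.sum_prod_type]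
      rw [← hQ.2]
      exact Finset.sum_congr rfl fun u _ => by
        simp only []
        rw [← Finset.mul_sum, (hW u).2, mul_one]
  · intro p; exact mul_nonneg (hQ.1 p.1) (hQV.1 p.2)
  · rw [Fintype.sum_prod_type]
    have : ∀ u, ∑ v, Q u * outputMarginal Q W v = Q u := fun u => by
      rw [← Finset.mul_sum, hQV.2, mul_one]
    simp only [this, hQ.2, le_refl]
  · intro p hp
    have h1 : 0 < Q p.1 := by
      rcases mul_pos_iff.1 hp with ⟨h, _⟩ | ⟨h, h'⟩
      · exact h
      · exact absurd h (not_lt.2 (hQ.1 p.1))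
    have h2 : 0 < outputMarginal Q W p.2 := by
      have : Q p.1 * W p.1 p.2 ≤ outputMarginal Q W p.2 :=
        Finset.single_le_sum (fun u _ => mul_nonneg (hQ.1 u) ((hW u).1 p.2))
          (Finset.mem_univ p.1)
      linarith
    exact mul_pos h1 h2

end Aux2
set_option linter.unusedSectionVars false
section Aux3

open Real

variable {U V : Type} [Fintype U] [Fintype V]

lemma cbProb_nonneg {Q : U → ℝ} (hQ : IsPMF Q) (n M : ℕ) (C : Fin M → Fin n → U) :
    0 ≤ cbProb Q n M C :=
  Finset.prod_nonneg fun m _ => prodPMF_nonneg hQ.1 n (C m)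

lemma cbP_nonneg {Q : U → ℝ} (hQ : IsPMF Q) (n M : ℕ)
    (S : (Fin M → Fin n → U) → Prop) : 0 ≤ cbP Q n M S :=
  Finset.sum_nonneg fun C _ => by
    split
    · exact cbProb_nonneg hQ n M C
    · exact le_refl 0

lemma cbP_mono {Q : U → ℝ} (hQ : IsPMF Q) (n M : ℕ)
    {S T : (Fin M → Fin n → U) → Prop} (h : ∀ C, S C → T C) :
    cbP Q n M S ≤ cbP Q n M T := by
  apply Finset.sum_le_sum
  intro C _
  by_cases hS : S C
  · simp [hS, h C hS]
  · simp only [hS, if_false]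
    split
    · exact cbProb_nonneg hQ n M C
    · exact le_refl 0

lemma cbP_or_le {Q : U → ℝ} (hQ : IsPMF Q) (n M : ℕ)
    (S T : (Fin M → Fin n → U) → Prop) :
    cbP Q n M (fun C => S C ∨ T C) ≤ cbP Q n M S + cbP Q n M T := by
  unfold cbP
  rw [← Finset.sum_add_distrib]
  apply Finset.sum_le_sum
  intro C _
  have h0 := cbProb_nonneg hQ n M C
  by_cases hS : S C <;> by_cases hT : T C <;> simp [hS, hT] <;> linarith

lemma cbP_exists_le {Q : U → ℝ} (hQ : IsPMF Q) (n M : ℕ)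
    {ι : Type} [Fintype ι] (P' : ι → (Fin M → Fin n → U) → Prop) :
    cbP Q n M (fun C => ∃ i, P' i C) ≤ ∑ i, cbP Q n M (P' i) := by
  unfold cbP
  rw [Finset.sum_comm]
  apply Finset.sum_le_sum
  intro C _
  have h0 := cbProb_nonneg hQ n M C
  by_cases hE : ∃ i, P' i C
  · obtain ⟨i, hi⟩ := hE
    rw [if_pos ⟨i, hi⟩]
    calc cbProb Q n M C = (if P' i C then cbProb Q n M C else 0) := by rw [if_pos hi]
      _ ≤ ∑ j, (if P' j C then cbProb Q n M C else 0) :=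
          Finset.single_le_sum
            (f := fun j => if P' j C then cbProb Q n M C else 0)
            (fun j _ => by by_cases h : P' j C <;> simp [h, h0])
            (Finset.mem_univ i)
  · rw [if_neg hE]
    exact Finset.sum_nonneg fun j _ => by by_cases h : P' j C <;> simp [h, h0]

/-- Chernoff-type bound via MGF. -/
lemma chernoff_bound {Q : U → ℝ} (hQ : IsPMF Q) (n M : ℕ)
    (φ : (Fin n → U) → ℝ) (b μ t a : ℝ) (hb : 0 < b) (hφ0 : ∀ x, 0 ≤ φ x)
    (hφb : ∀ x, φ x ≤ b) (hEφ : ∑ x, prodPMF Q n x * φ x ≤ μ)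
    (ht : 0 ≤ t) :
    cbP Q n M (fun C => a ≤ ∑ m, φ (C m)) ≤
      Real.exp ((M : ℝ) * (μ / b) * (Real.exp (t * b) - 1) - t * a) := by
  have hQn := isPMF_prodPMF hQ n
  -- Step 1: indicator ≤ exponential tilt
  have step1 : cbP Q n M (fun C => a ≤ ∑ m, φ (C m)) ≤
      ∑ C : Fin M → Fin n → U,
        cbProb Q n M C * Real.exp (t * (∑ m, φ (C m)) - t * a) := by
    apply Finset.sum_le_sum
    intro C _
    have h0 := cbProb_nonneg hQ n M C
    by_cases hC : a ≤ ∑ m, φ (C m)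
    · rw [if_pos hC]
      have : (1:ℝ) ≤ Real.exp (t * (∑ m, φ (C m)) - t * a) := by
        rw [← Real.exp_zero]
        apply Real.exp_le_exp.2
        have := mul_le_mul_of_nonneg_left hC ht
        linarith
      nlinarith
    · rw [if_neg hC]
      positivity
  -- Step 2: factorize
  have step2 : ∀ C : Fin M → Fin n → U,
      cbProb Q n M C * Real.exp (t * (∑ m, φ (C m)) - t * a)
      = Real.exp (-(t * a)) * ∏ m, (prodPMF Q n (C m) * Real.exp (t * φ (C m))) := by
    intro C
    have harg : t * (∑ m, φ (C m)) - t * a = (∑ m, t * φ (C m)) + (-(t * a)) := by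
      rw [Finset.mul_sum]; ring
    rw [harg, Real.exp_add, Real.exp_sum, Finset.prod_mul_distrib]
    unfold cbProb
    ring
  -- Step 3: product structure
  have step3 : ∑ C : Fin M → Fin n → U,
      ∏ m, (prodPMF Q n (C m) * Real.exp (t * φ (C m)))
      = (∑ x : Fin n → U, prodPMF Q n x * Real.exp (t * φ x)) ^ M :=
    (Fintype.sum_pow (fun x => prodPMF Q n x * Real.exp (t * φ x)) M).symm
  -- convexity bound on each mgf term
  have hconv : ∀ x : Fin n → U, Real.exp (t * φ x)
      ≤ 1 + (φ x / b) * (Real.exp (t * b) - 1) := by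
    intro x
    set θ := φ x / b with hθdef
    have hθ0 : 0 ≤ θ := div_nonneg (hφ0 x) hb.le
    have hθ1 : θ ≤ 1 := (div_le_one hb).2 (hφb x)
    have h := convexOn_exp.2 (Set.mem_univ (t * b)) (Set.mem_univ (0:ℝ))
      hθ0 (by linarith : (0:ℝ) ≤ 1 - θ) (by ring)
    have harg : θ • (t * b) + (1 - θ) • (0:ℝ) = t * φ x := by
      simp only [smul_eq_mul, mul_zero, add_zero, hθdef]
      field_simp
    rw [harg] at h
    simp only [smul_eq_mul, Real.exp_zero, mul_one] at h
    calc Real.exp (t * φ x) ≤ θ * Real.exp (t * b) + (1 - θ) := h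
      _ = 1 + θ * (Real.exp (t * b) - 1) := by ring
  have hexptb : (1:ℝ) ≤ Real.exp (t * b) := by
    rw [← Real.exp_zero]
    exact Real.exp_le_exp.2 (by positivity)
  have hE0 : 0 ≤ ∑ x, prodPMF Q n x * φ x :=
    Finset.sum_nonneg fun x _ => mul_nonneg (prodPMF_nonneg hQ.1 n x) (hφ0 x)
  have hμ0 : 0 ≤ μ := le_trans hE0 hEφ
  set z := (μ / b) * (Real.exp (t * b) - 1) with hzdef
  have hz0 : 0 ≤ z := mul_nonneg (div_nonneg hμ0 hb.le) (by linarith)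
  -- Step 4: bound the base
  have step4 : ∑ x : Fin n → U, prodPMF Q n x * Real.exp (t * φ x) ≤ 1 + z := by
    calc ∑ x : Fin n → U, prodPMF Q n x * Real.exp (t * φ x)
        ≤ ∑ x : Fin n → U, prodPMF Q n x * (1 + (φ x / b) * (Real.exp (t * b) - 1)) :=
          Finset.sum_le_sum fun x _ =>
            mul_le_mul_of_nonneg_left (hconv x) (prodPMF_nonneg hQ.1 n x)
      _ = (∑ x : Fin n → U, prodPMF Q n x)
            + ((Real.exp (t * b) - 1) / b) * ∑ x, prodPMF Q n x * φ x := by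
          rw [Finset.mul_sum, ← Finset.sum_add_distrib]
          exact Finset.sum_congr rfl fun x _ => by ring
      _ ≤ 1 + ((Real.exp (t * b) - 1) / b) * μ := by
          rw [hQn.2]
          have : ((Real.exp (t * b) - 1) / b) * ∑ x, prodPMF Q n x * φ x
              ≤ ((Real.exp (t * b) - 1) / b) * μ :=
            mul_le_mul_of_nonneg_left hEφ (div_nonneg (by linarith) hb.le)
          linarith
      _ = 1 + z := by rw [hzdef]; ring
  have hbase0 : 0 ≤ ∑ x : Fin n → U, prodPMF Q n x * Real.exp (t * φ x) :=
    Finset.sum_nonneg fun x _ =>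
      mul_nonneg (prodPMF_nonneg hQ.1 n x) (Real.exp_nonneg _)
  -- Combine
  calc cbP Q n M (fun C => a ≤ ∑ m, φ (C m))
      ≤ ∑ C : Fin M → Fin n → U,
          cbProb Q n M C * Real.exp (t * (∑ m, φ (C m)) - t * a) := step1
    _ = Real.exp (-(t * a)) *
          ((∑ x : Fin n → U, prodPMF Q n x * Real.exp (t * φ x)) ^ M) := by
        rw [← step3, Finset.mul_sum]
        exact Finset.sum_congr rfl fun C _ => step2 C
    _ ≤ Real.exp (-(t * a)) * (1 + z) ^ M := by
        apply mul_le_mul_of_nonneg_left _ (Real.exp_nonneg _)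
        exact pow_le_pow_left₀ hbase0 step4 M
    _ ≤ Real.exp (-(t * a)) * Real.exp ((M : ℝ) * z) := by
        apply mul_le_mul_of_nonneg_left _ (Real.exp_nonneg _)
        rw [Real.exp_nat_mul]
        apply pow_le_pow_left₀ (by linarith)
        linarith [Real.add_one_le_exp z]
    _ = Real.exp ((M : ℝ) * (μ / b) * (Real.exp (t * b) - 1) - t * a) := by
        rw [← Real.exp_add, hzdef]
        congr 1
        ring

end Aux3
set_option linter.unusedSectionVars false
section Aux4

open Real

variable {U V : Type} [Fintype U] [Fintype V]

lemma exp_le_quad {x : ℝ} (h0 : 0 ≤ x) (h1 : x ≤ 1) :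
    Real.exp x ≤ 1 + x + (3/4) * x^2 := by
  have h := Real.exp_bound' h0 h1 (n := 2) (by norm_num)
  simp [Finset.sum_range_succ, Nat.factorial] at h
  nlinarith [h]

/-- Chernoff application 1: bounded-by-one variables, threshold `2Mμ`. -/
lemma chernoff_A {Q : U → ℝ} (hQ : IsPMF Q) (n M : ℕ)
    (φ : (Fin n → U) → ℝ) (μ : ℝ) (hφ0 : ∀ x, 0 ≤ φ x) (hφ1 : ∀ x, φ x ≤ 1)
    (hEφ : ∑ x, prodPMF Q n x * φ x ≤ μ) :
    cbP Q n M (fun C => 2 * (M:ℝ) * μ ≤ ∑ m, φ (C m)) ≤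
      Real.exp (-(1/3) * ((M:ℝ) * μ)) := by
  have hE0 : 0 ≤ ∑ x, prodPMF Q n x * φ x :=
    Finset.sum_nonneg fun x _ => mul_nonneg (prodPMF_nonneg hQ.1 n x) (hφ0 x)
  have hμ0 : 0 ≤ μ := le_trans hE0 hEφ
  have h := chernoff_bound hQ n M φ 1 μ (2/3) (2 * (M:ℝ) * μ) one_pos hφ0 hφ1 hEφ
    (by norm_num)
  refine le_trans h (Real.exp_le_exp.2 ?_)
  have hexp : Real.exp ((2:ℝ)/3 * 1) ≤ 2 := by
    have := exp_le_quad (x := (2:ℝ)/3) (by norm_num) (by norm_num)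
    norm_num at this ⊢
    linarith
  have hMμ : 0 ≤ (M:ℝ) * μ := mul_nonneg (Nat.cast_nonneg M) hμ0
  have : (M:ℝ) * (μ / 1) * (Real.exp (2/3 * 1) - 1) ≤ (M:ℝ) * μ * 1 := by
    rw [div_one]
    apply mul_le_mul_of_nonneg_left _ hMμ
    linarith
  nlinarith

/-- Chernoff application 2: variables bounded by `b`, mean at most 1, threshold `(1+δ)M`. -/
lemma chernoff_B {Q : U → ℝ} (hQ : IsPMF Q) (n M : ℕ)
    (φ : (Fin n → U) → ℝ) (b δ : ℝ) (hb : 0 < b) (hδ0 : 0 < δ) (hδ1 : δ ≤ 1)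
    (hφ0 : ∀ x, 0 ≤ φ x) (hφb : ∀ x, φ x ≤ b)
    (hEφ : ∑ x, prodPMF Q n x * φ x ≤ 1) :
    cbP Q n M (fun C => (1 + δ) * (M:ℝ) ≤ ∑ m, φ (C m)) ≤
      Real.exp (-(1/3) * ((M:ℝ) * δ^2 / b)) := by
  have h := chernoff_bound hQ n M φ b 1 (2/3 * δ / b) ((1 + δ) * (M:ℝ)) hb hφ0 hφb hEφ
    (by positivity)
  refine le_trans h (Real.exp_le_exp.2 ?_)
  have htb : (2:ℝ)/3 * δ / b * b = 2/3 * δ := by field_simp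
  rw [htb]
  have hexp : Real.exp ((2:ℝ)/3 * δ) ≤ 1 + 2/3 * δ + 1/3 * δ^2 := by
    have := exp_le_quad (x := (2:ℝ)/3 * δ) (by positivity) (by linarith)
    nlinarith
  have hM0 : (0:ℝ) ≤ (M:ℝ) := Nat.cast_nonneg M
  have key : (M:ℝ) * (1 / b) * (Real.exp (2/3 * δ) - 1) - 2/3 * δ / b * ((1 + δ) * M)
      ≤ -(1/3) * ((M:ℝ) * δ^2 / b) := by
    have h1 : (M:ℝ) * (1 / b) * (Real.exp (2/3 * δ) - 1)
        ≤ (M:ℝ) * (1 / b) * (2/3 * δ + 1/3 * δ^2) := by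
      apply mul_le_mul_of_nonneg_left _ (by positivity)
      linarith
    have h2 : (M:ℝ) * (1 / b) * (2/3 * δ + 1/3 * δ^2) - 2/3 * δ / b * ((1 + δ) * M)
        = -(1/3) * ((M:ℝ) * δ^2 / b) := by
      field_simp
      ring
    linarith
  exact key

/-- Probability that all codewords land in `T`. -/
lemma cbP_forall_le {Q : U → ℝ} (hQ : IsPMF Q) (n M : ℕ)
    (T : (Fin n → U) → Prop) (q : ℝ)
    (hq : ∑ x, (if T x then prodPMF Q n x else 0) ≤ q) :
    cbP Q n M (fun C => ∀ m, T (C m)) ≤ q ^ M := by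
  have hsum : cbP Q n M (fun C => ∀ m, T (C m))
      = (∑ x, (if T x then prodPMF Q n x else 0)) ^ M := by
    unfold cbP
    rw [Fintype.sum_pow]
    apply Finset.sum_congr rfl
    intro C _
    by_cases hC : ∀ m, T (C m)
    · rw [if_pos hC]
      unfold cbProb
      exact Finset.prod_congr rfl fun m _ => by rw [if_pos (hC m)]
    · rw [if_neg hC]
      push_neg at hC
      obtain ⟨m₀, hm₀⟩ := hC
      exact (Finset.prod_eq_zero (Finset.mem_univ m₀) (by rw [if_neg hm₀])).symm
  rw [hsum]
  apply pow_le_pow_left₀ _ hq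
  exact Finset.sum_nonneg fun x _ => by
    split
    · exact prodPMF_nonneg hQ.1 n x
    · exact le_refl 0

end Aux4
set_option maxHeartbeats 1000000 in
/-- **Union bound on bad codebooks.** If the atypicality probability is at most `2^{-β₁ n}`,
then the probability that the random codebook fails any of the three goodness conditions
is at most `exp(−(1/3)2^{n(R−β₁)}) + |𝒱|^n exp(−(1/3)2^{n(R−I_Q(U;V)−ε−2β₂)})`. -/
theorem union_bound_bad_codebooks {U V : Type} [Fintype U] [Fintype V]
    (Q : U → ℝ) (W : U → V → ℝ) (hQ : IsPMF Q) (hW : ∀ u, IsPMF (W u))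
    (R : ℝ) (hR0 : 0 < R) (ε : ℝ) (hε : 0 < ε)
    (β₁ : ℝ) (hβ₁ : 0 < β₁) (β₂ : ℝ) (hβ₂ : 0 < β₂) (n : ℕ)
    (hatyp : atypProb Q W n ε ≤ (2 : ℝ) ^ (-(β₁ * n))) :
    cbP Q n ⌈(2 : ℝ) ^ ((n : ℝ) * R)⌉₊
      (fun C => ¬ (
        (∑ y : Fin n → V, PC2 Q W n ⌈(2 : ℝ) ^ ((n : ℝ) * R)⌉₊ ε C y
            < 2 * (2 : ℝ) ^ (-(β₁ * n))) ∧
        (∀ y : Fin n → V, 0 < prodPMF (outputMarginal Q W) n y →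
          DC1 Q W n ⌈(2 : ℝ) ^ ((n : ℝ) * R)⌉₊ ε C y < 1 + (2 : ℝ) ^ (-(β₂ * n))) ∧
        (∀ y : Fin n → V, 0 < prodPMF (outputMarginal Q W) n y →
          DC2 Q W n ⌈(2 : ℝ) ^ ((n : ℝ) * R)⌉₊ ε C y < (maxInvQV Q W) ^ n)))
      ≤ Real.exp (-(1 / 3) * (2 : ℝ) ^ ((n : ℝ) * (R - β₁)))
        + (Fintype.card V : ℝ) ^ n *
            Real.exp (-(1 / 3) * (2 : ℝ) ^ ((n : ℝ) * (R - mutualInfo Q W - ε - 2 * β₂))) := by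
  classical
  have hQVpmf : IsPMF (outputMarginal Q W) := isPMF_outputMarginal hQ hW
  have hI0 : 0 ≤ mutualInfo Q W := mutualInfo_nonneg hQ hW
  have hRHSpos : (0:ℝ) ≤ Real.exp (-(1 / 3) * (2 : ℝ) ^ ((n : ℝ) * (R - β₁)))
      + (Fintype.card V : ℝ) ^ n *
          Real.exp (-(1 / 3) * (2 : ℝ) ^ ((n : ℝ) * (R - mutualInfo Q W - ε - 2 * β₂))) := by
    positivity
  rcases Nat.eq_zero_or_pos n with hn0 | hn
  · -- the degenerate case n = 0 : the bad event is empty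
    subst hn0
    have hM : ⌈(2 : ℝ) ^ (((0:ℕ) : ℝ) * R)⌉₊ = 1 := by
      norm_num
    have htyp : ∀ p : (Fin 0 → U) × (Fin 0 → V), p ∈ typicalSet Q W 0 ε := by
      intro p
      show (1 / ((0:ℕ) : ℝ)) * _ ≤ _
      simp only [Nat.cast_zero, div_zero, zero_mul]
      linarith
    have hPC2 : ∀ (C : Fin ⌈(2 : ℝ) ^ (((0:ℕ)) * R)⌉₊ → Fin 0 → U) (y : Fin 0 → V),
        PC2 Q W 0 ⌈(2 : ℝ) ^ (((0:ℕ)) * R)⌉₊ ε C y = 0 := by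
      intro C y
      unfold PC2
      have : ∀ m, (if (C m, y) ∉ typicalSet Q W 0 ε then prodChannel W 0 (C m) y else 0)
          = 0 := fun m => by rw [if_neg (not_not_intro (htyp (C m, y)))]
      simp [this]
    have hgood : ∀ C : Fin ⌈(2 : ℝ) ^ (((0:ℕ)) * R)⌉₊ → Fin 0 → U,
        ((∑ y : Fin 0 → V, PC2 Q W 0 ⌈(2 : ℝ) ^ (((0:ℕ) : ℝ) * R)⌉₊ ε C y
            < 2 * (2 : ℝ) ^ (-(β₁ * (0:ℕ)))) ∧
        (∀ y : Fin 0 → V, 0 < prodPMF (outputMarginal Q W) 0 y →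
          DC1 Q W 0 ⌈(2 : ℝ) ^ (((0:ℕ) : ℝ) * R)⌉₊ ε C y < 1 + (2 : ℝ) ^ (-(β₂ * (0:ℕ)))) ∧
        (∀ y : Fin 0 → V, 0 < prodPMF (outputMarginal Q W) 0 y →
          DC2 Q W 0 ⌈(2 : ℝ) ^ (((0:ℕ) : ℝ) * R)⌉₊ ε C y < (maxInvQV Q W) ^ 0)) := by
      intro C
      have hpow : (2 : ℝ) ^ (-(β₁ * ((0:ℕ):ℝ))) = 1 := by
        norm_num
      have hpow2 : (2 : ℝ) ^ (-(β₂ * ((0:ℕ):ℝ))) = 1 := by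
        norm_num
      refine ⟨?_, ?_, ?_⟩
      · rw [hpow]
        rw [Finset.sum_eq_zero fun y _ => hPC2 C y]
        norm_num
      · intro y hy
        rw [hpow2]
        have hPC1 : PC1 Q W 0 ⌈(2 : ℝ) ^ (((0:ℕ) : ℝ) * R)⌉₊ ε C y = 1 := by
          unfold PC1
          have : ∀ m, (if (C m, y) ∈ typicalSet Q W 0 ε then prodChannel W 0 (C m) y else 0)
              = 1 := fun m => by
            rw [if_pos (htyp (C m, y))]
            simp [prodChannel]
          simp only [this, Finset.sum_const, Finset.card_univ, Fintype.card_fin,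
            nsmul_eq_mul, mul_one]
          rw [hM]
          norm_num
        unfold DC1
        rw [hPC1]
        have : prodPMF (outputMarginal Q W) 0 y = 1 := by simp [prodPMF]
        rw [this]
        norm_num
      · intro y hy
        unfold DC2
        rw [hPC2 C y]
        have : prodPMF (outputMarginal Q W) 0 y = 1 := by simp [prodPMF]
        rw [this]
        norm_num
    refine le_trans (le_of_eq ?_) hRHSpos
    unfold cbP
    apply Finset.sum_eq_zero
    intro C _
    rw [if_neg (not_not_intro (hgood C))]
  · -- main case n ≥ 1
    set M := ⌈(2 : ℝ) ^ ((n : ℝ) * R)⌉₊ with hMdef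
    have hnr : (0:ℝ) < (n:ℝ) := by exact_mod_cast hn
    have h2nR1 : (1:ℝ) < (2:ℝ) ^ ((n:ℝ) * R) := by
      have := Real.rpow_lt_rpow_of_exponent_lt one_lt_two
        (show (0:ℝ) < (n:ℝ) * R by positivity)
      simpa using this
    have hMreal : (2:ℝ) ^ ((n:ℝ) * R) ≤ (M:ℝ) := Nat.le_ceil _
    have hMpos : 0 < M := Nat.ceil_pos.2 (by linarith)
    have hM2 : 2 ≤ M := by
      have h1 : 1 < M := Nat.lt_ceil.2 (by push_cast; linarith)
      omega
    have hMr0 : (0:ℝ) < (M:ℝ) := by exact_mod_cast hMpos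
    set μ := (2:ℝ) ^ (-(β₁ * (n:ℝ))) with hμdef
    have hμ0 : 0 < μ := Real.rpow_pos_of_pos two_pos _
    have hμ1 : μ ≤ 1 :=
      Real.rpow_le_one_of_one_le_of_nonpos one_le_two
        (neg_nonpos.2 (by positivity))
    set δ := (2:ℝ) ^ (-(β₂ * (n:ℝ))) with hδdef
    have hδ0 : 0 < δ := Real.rpow_pos_of_pos two_pos _
    have hδ1 : δ ≤ 1 :=
      Real.rpow_le_one_of_one_le_of_nonpos one_le_two
        (neg_nonpos.2 (by positivity))
    set B := (2:ℝ) ^ ((n:ℝ) * (mutualInfo Q W + ε)) with hBdef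
    have hB0 : 0 < B := Real.rpow_pos_of_pos two_pos _
    -- the atypical one-codeword weight
    set f : (Fin n → U) → ℝ := fun x => ∑ y : Fin n → V,
      if (x, y) ∉ typicalSet Q W n ε then prodChannel W n x y else 0 with hfdef
    have hf0 : ∀ x, 0 ≤ f x := fun x =>
      Finset.sum_nonneg fun y _ => by
        split
        · exact prodChannel_nonneg hW n x y
        · exact le_refl 0
    have hf1 : ∀ x, f x ≤ 1 := fun x => by
      calc f x ≤ ∑ y : Fin n → V, prodChannel W n x y :=
            Finset.sum_le_sum fun y _ => by
              split
              · exact le_refl _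
              · exact prodChannel_nonneg hW n x y
        _ = 1 := sum_prodChannel hW n x
    have hEf : ∑ x, prodPMF Q n x * f x ≤ μ := by
      have heq : ∑ x, prodPMF Q n x * f x = atypProb Q W n ε := by
        unfold atypProb
        apply Finset.sum_congr rfl
        intro x _
        rw [hfdef, Finset.mul_sum]
        apply Finset.sum_congr rfl
        intro y _
        rw [mul_ite, mul_zero]
        congr 1
        rw [prodPMF, prodChannel, ← Finset.prod_mul_distrib]
      rw [heq]
      exact hatyp
    have hsumPC2 : ∀ C : Fin M → Fin n → U,
        ∑ y : Fin n → V, PC2 Q W n M ε C y = (M:ℝ)⁻¹ * ∑ m, f (C m) := by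
      intro C
      unfold PC2
      rw [← Finset.mul_sum, Finset.sum_comm]
    clear_value M μ δ B f
    -- maxInvQV facts
    have hmaxge : ∀ v, 0 < outputMarginal Q W v →
        (outputMarginal Q W v)⁻¹ ≤ maxInvQV Q W := by
      intro v hv
      apply le_csSup ((Set.toFinite _).bddAbove)
      exact ⟨v, hv, rfl⟩
    have hprodpos : ∀ y : Fin n → V, 0 < prodPMF (outputMarginal Q W) n y →
        ∀ i, 0 < outputMarginal Q W (y i) := by
      intro y hy i
      rcases (hQVpmf.1 (y i)).lt_or_eq with h | h
      · exact h
      · exfalso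
        have : prodPMF (outputMarginal Q W) n y = 0 :=
          Finset.prod_eq_zero (Finset.mem_univ i) h.symm
        rw [this] at hy
        exact lt_irrefl 0 hy
    have hPmax : ∀ y : Fin n → V, 0 < prodPMF (outputMarginal Q W) n y →
        1 ≤ prodPMF (outputMarginal Q W) n y * (maxInvQV Q W) ^ n := by
      intro y hy
      have heq : prodPMF (outputMarginal Q W) n y * (maxInvQV Q W) ^ n
          = ∏ i : Fin n, (outputMarginal Q W (y i) * maxInvQV Q W) := by
        rw [Finset.prod_mul_distrib, Finset.prod_const, Finset.card_univ,
          Fintype.card_fin, prodPMF]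
      rw [heq]
      calc (1:ℝ) = ∏ _i : Fin n, (1:ℝ) := by simp
        _ ≤ ∏ i : Fin n, (outputMarginal Q W (y i) * maxInvQV Q W) := by
            apply Finset.prod_le_prod (fun i _ => by norm_num)
            intro i _
            have hpos := hprodpos y hy i
            have := mul_le_mul_of_nonneg_left (hmaxge (y i) hpos) hpos.le
            rwa [mul_inv_cancel₀ hpos.ne'] at this
    have hPC2le1 : ∀ (C : Fin M → Fin n → U) (y : Fin n → V),
        PC2 Q W n M ε C y ≤ 1 := by
      intro C y
      unfold PC2
      have hsum : ∑ m : Fin M, (if (C m, y) ∉ typicalSet Q W n ε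
          then prodChannel W n (C m) y else 0) ≤ (M:ℝ) := by
        calc ∑ m : Fin M, (if (C m, y) ∉ typicalSet Q W n ε
              then prodChannel W n (C m) y else 0)
            ≤ ∑ _m : Fin M, (1:ℝ) := Finset.sum_le_sum fun m _ => by
              split
              · exact prodChannel_le_one hW n (C m) y
              · norm_num
          _ = (M:ℝ) := by simp
      calc (M:ℝ)⁻¹ * ∑ m : Fin M, (if (C m, y) ∉ typicalSet Q W n ε
            then prodChannel W n (C m) y else 0)
          ≤ (M:ℝ)⁻¹ * (M:ℝ) :=
            mul_le_mul_of_nonneg_left hsum (by positivity)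
        _ = 1 := inv_mul_cancel₀ hMr0.ne'
    have hPC2ge1 : ∀ (C : Fin M → Fin n → U) (y : Fin n → V),
        0 < prodPMF (outputMarginal Q W) n y →
        (maxInvQV Q W) ^ n ≤ DC2 Q W n M ε C y →
        1 ≤ PC2 Q W n M ε C y := by
      intro C y hy hD
      unfold DC2 at hD
      have h1 : (maxInvQV Q W) ^ n * prodPMF (outputMarginal Q W) n y
          ≤ PC2 Q W n M ε C y := (le_div_iff₀ hy).1 hD
      calc (1:ℝ) ≤ prodPMF (outputMarginal Q W) n y * (maxInvQV Q W) ^ n := hPmax y hy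
        _ = (maxInvQV Q W) ^ n * prodPMF (outputMarginal Q W) n y := mul_comm _ _
        _ ≤ PC2 Q W n M ε C y := h1
    -- main split
    have hT1 : cbP Q n M (fun C =>
        ¬(∑ y : Fin n → V, PC2 Q W n M ε C y < 2 * μ) ∨
        ¬(∀ y : Fin n → V, 0 < prodPMF (outputMarginal Q W) n y →
          DC2 Q W n M ε C y < (maxInvQV Q W) ^ n))
        ≤ Real.exp (-(1 / 3) * (2 : ℝ) ^ ((n : ℝ) * (R - β₁))) := by
      by_cases hcase : 2 * μ ≤ 1
      · -- both sub-events force the tilted sum to be large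
        have hincl : ∀ C : Fin M → Fin n → U,
            (¬(∑ y : Fin n → V, PC2 Q W n M ε C y < 2 * μ) ∨
             ¬(∀ y : Fin n → V, 0 < prodPMF (outputMarginal Q W) n y →
               DC2 Q W n M ε C y < (maxInvQV Q W) ^ n)) →
            2 * (M:ℝ) * μ ≤ ∑ m, f (C m) := by
          intro C hC
          rcases hC with h1 | h3
          · have h1' : 2 * μ ≤ ∑ y, PC2 Q W n M ε C y := not_lt.1 h1
            rw [hsumPC2 C] at h1'
            have h2 := mul_le_mul_of_nonneg_left h1' hMr0.le
            have h3 : (M:ℝ) * ((M:ℝ)⁻¹ * ∑ m, f (C m)) = ∑ m, f (C m) := by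
              field_simp
            rw [h3] at h2
            linarith
          · push_neg at h3
            obtain ⟨y, hy, hD⟩ := h3
            have hge1 : 1 ≤ PC2 Q W n M ε C y := hPC2ge1 C y hy hD
            have hle : (1:ℝ) ≤ ∑ y', PC2 Q W n M ε C y' := by
              refine le_trans hge1
                (Finset.single_le_sum (fun y' _ => ?_) (Finset.mem_univ y))
              unfold PC2
              apply mul_nonneg (by positivity)
              exact Finset.sum_nonneg fun m _ => by
                split
                · exact prodChannel_nonneg hW n (C m) y'
                · exact le_refl 0
            rw [hsumPC2 C] at hle
            have h2 := mul_le_mul_of_nonneg_left hle hMr0.le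
            have h3 : (M:ℝ) * ((M:ℝ)⁻¹ * ∑ m, f (C m)) = ∑ m, f (C m) := by
              field_simp
            rw [h3, mul_one] at h2
            nlinarith
        refine le_trans (cbP_mono hQ n M hincl) ?_
        refine le_trans (chernoff_A hQ n M f μ hf0 hf1 hEf) ?_
        apply Real.exp_le_exp.2
        have hkey : (2:ℝ) ^ ((n:ℝ) * (R - β₁)) ≤ (M:ℝ) * μ := by
          have heq : (2:ℝ) ^ ((n:ℝ) * (R - β₁)) = (2:ℝ) ^ ((n:ℝ) * R) * μ := by
            rw [hμdef, ← Real.rpow_add two_pos]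
            congr 1
            ring
          rw [heq]
          exact mul_le_mul_of_nonneg_right hMreal hμ0.le
        nlinarith
      · -- here the first event is void and the third is superexponentially rare
        push_neg at hcase
        have himp : ∀ C : Fin M → Fin n → U,
            (¬(∑ y : Fin n → V, PC2 Q W n M ε C y < 2 * μ) ∨
             ¬(∀ y : Fin n → V, 0 < prodPMF (outputMarginal Q W) n y →
               DC2 Q W n M ε C y < (maxInvQV Q W) ^ n)) →
            ∃ y : Fin n → V, 0 < prodPMF (outputMarginal Q W) n y ∧
              (maxInvQV Q W) ^ n ≤ DC2 Q W n M ε C y := by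
          intro C hC
          rcases hC with h1 | h3
          · exfalso
            apply h1
            rw [hsumPC2 C]
            have hsf : ∑ m, f (C m) ≤ (M:ℝ) := by
              calc ∑ m, f (C m) ≤ ∑ _m : Fin M, (1:ℝ) :=
                    Finset.sum_le_sum fun m _ => hf1 _
                _ = (M:ℝ) := by simp
            calc (M:ℝ)⁻¹ * ∑ m, f (C m) ≤ (M:ℝ)⁻¹ * (M:ℝ) :=
                  mul_le_mul_of_nonneg_left hsf (by positivity)
              _ = 1 := inv_mul_cancel₀ hMr0.ne'
              _ < 2 * μ := hcase
          · push_neg at h3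
            obtain ⟨y, hy, hD⟩ := h3
            exact ⟨y, hy, hD⟩
        refine le_trans (cbP_mono hQ n M himp) ?_
        refine le_trans (cbP_exists_le hQ n M _) ?_
        have hy3 : ∀ y : Fin n → V,
            cbP Q n M (fun C => 0 < prodPMF (outputMarginal Q W) n y ∧
              (maxInvQV Q W) ^ n ≤ DC2 Q W n M ε C y)
            ≤ prodPMF (outputMarginal Q W) n y * ((1/2:ℝ)) ^ (n * (M - 1)) := by
          intro y
          by_cases hex : ∃ C : Fin M → Fin n → U,
              0 < prodPMF (outputMarginal Q W) n y ∧
              (maxInvQV Q W) ^ n ≤ DC2 Q W n M ε C y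
          · obtain ⟨C₀, hy0, hD0⟩ := hex
            -- every codebook in the event has all its codewords atypical with unit channel mass
            have hstruct : ∀ C : Fin M → Fin n → U,
                (0 < prodPMF (outputMarginal Q W) n y ∧
                  (maxInvQV Q W) ^ n ≤ DC2 Q W n M ε C y) →
                ∀ m, ((C m, y) ∉ typicalSet Q W n ε ∧ prodChannel W n (C m) y = 1) := by
              intro C hC m
              obtain ⟨hy', hD'⟩ := hC
              have hge1 := hPC2ge1 C y hy' hD'
              have hsumge : (M:ℝ) ≤ ∑ m' : Fin M,
                  (if (C m', y) ∉ typicalSet Q W n ε then prodChannel W n (C m') y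
                    else 0) := by
                unfold PC2 at hge1
                have h2 := mul_le_mul_of_nonneg_left hge1 hMr0.le
                have h3 : (M:ℝ) * ((M:ℝ)⁻¹ * ∑ m' : Fin M,
                    (if (C m', y) ∉ typicalSet Q W n ε then prodChannel W n (C m') y
                      else 0))
                    = ∑ m' : Fin M,
                    (if (C m', y) ∉ typicalSet Q W n ε then prodChannel W n (C m') y
                      else 0) := by
                  field_simp
                rw [h3, mul_one] at h2
                exact h2
              have ha1 : ∀ m' : Fin M,
                  (if (C m', y) ∉ typicalSet Q W n ε then prodChannel W n (C m') y
                    else 0) ≤ 1 := fun m' => by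
                split
                · exact prodChannel_le_one hW n (C m') y
                · norm_num
              have hall : ∀ m' : Fin M,
                  (if (C m', y) ∉ typicalSet Q W n ε then prodChannel W n (C m') y
                    else 0) = 1 := by
                by_contra hne
                push_neg at hne
                obtain ⟨m₀, hm₀⟩ := hne
                have hlt := lt_of_le_of_ne (ha1 m₀) hm₀
                have hslt : ∑ m' : Fin M,
                    (if (C m', y) ∉ typicalSet Q W n ε then prodChannel W n (C m') y
                      else 0) < ∑ _m' : Fin M, (1:ℝ) :=
                  Finset.sum_lt_sum (fun m' _ => ha1 m') ⟨m₀, Finset.mem_univ m₀, hlt⟩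
                simp only [Finset.sum_const, Finset.card_univ, Fintype.card_fin,
                  nsmul_eq_mul, mul_one] at hslt
                linarith
              have hm := hall m
              by_cases htypm : (C m, y) ∉ typicalSet Q W n ε
              · rw [if_pos htypm] at hm
                exact ⟨htypm, hm⟩
              · rw [if_neg htypm] at hm
                norm_num at hm
            -- P·maxInv^n = 1
            have hDC0 : (maxInvQV Q W) ^ n * prodPMF (outputMarginal Q W) n y
                ≤ PC2 Q W n M ε C₀ y := by
              unfold DC2 at hD0
              exact (le_div_iff₀ hy0).1 hD0
            have hPle : prodPMF (outputMarginal Q W) n y * (maxInvQV Q W) ^ n ≤ 1 := by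
              calc prodPMF (outputMarginal Q W) n y * (maxInvQV Q W) ^ n
                  = (maxInvQV Q W) ^ n * prodPMF (outputMarginal Q W) n y := mul_comm _ _
                _ ≤ PC2 Q W n M ε C₀ y := hDC0
                _ ≤ 1 := hPC2le1 C₀ y
            have hi0 : (⟨0, hn⟩ : Fin n) = ⟨0, hn⟩ := rfl
            have hQVi : 0 < outputMarginal Q W (y ⟨0, hn⟩) := hprodpos y hy0 ⟨0, hn⟩
            have hmaxpos : 0 < maxInvQV Q W :=
              lt_of_lt_of_le (inv_pos.2 hQVi) (hmaxge _ hQVi)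
            have hmaxpow : 0 < (maxInvQV Q W) ^ n := pow_pos hmaxpos n
            have hPeq : prodPMF (outputMarginal Q W) n y = ((maxInvQV Q W) ^ n)⁻¹ := by
              have h1 : prodPMF (outputMarginal Q W) n y * (maxInvQV Q W) ^ n = 1 :=
                le_antisymm hPle (hPmax y hy0)
              field_simp at h1 ⊢
              linarith
            -- from atypicality of codeword 0: P < 1
            have hm0 := hstruct C₀ ⟨hy0, hD0⟩ ⟨0, hMpos⟩
            have hPlt1 : prodPMF (outputMarginal Q W) n y < 1 := by
              by_contra hP1
              push_neg at hP1
              apply hm0.1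
              show (1 / (n : ℝ)) * Real.logb 2
                  (prodChannel W n (C₀ ⟨0, hMpos⟩) y / prodPMF (outputMarginal Q W) n y)
                  ≤ mutualInfo Q W + ε
              rw [hm0.2]
              have hratio : (1:ℝ) / prodPMF (outputMarginal Q W) n y ≤ 1 := by
                rw [div_le_one hy0]
                exact hP1
              have hlogle : Real.logb 2 (1 / prodPMF (outputMarginal Q W) n y) ≤ 0 :=
                Real.logb_nonpos one_lt_two (by positivity) hratio
              have hmul : (1 / (n : ℝ)) * Real.logb 2
                  (1 / prodPMF (outputMarginal Q W) n y) ≤ 0 :=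
                mul_nonpos_of_nonneg_of_nonpos (by positivity) hlogle
              linarith
            -- maxInv⁻¹ ≤ 1/2
            have hmaxinv_lt1 : (maxInvQV Q W)⁻¹ < 1 := by
              rw [hPeq] at hPlt1
              have hgt1 : 1 < (maxInvQV Q W) ^ n := by
                have := (inv_lt_one_iff₀).1 hPlt1
                rcases this with h | h
                · exact absurd h (not_le.2 hmaxpow)
                · exact h
              have : 1 < maxInvQV Q W := by
                by_contra hle
                push_neg at hle
                have := pow_le_one₀ hmaxpos.le hle (n := n)
                linarith
              rw [inv_lt_one_iff₀]
              right
              exact this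
            have hhalf : (maxInvQV Q W)⁻¹ ≤ 1/2 := by
              obtain ⟨v₀, hv₀pos, hv₀eq⟩ : ∃ v₀, 0 < outputMarginal Q W v₀ ∧
                  (outputMarginal Q W v₀)⁻¹ = maxInvQV Q W := by
                have hne : ((fun v => (outputMarginal Q W v)⁻¹) ''
                    {v | 0 < outputMarginal Q W v}).Nonempty :=
                  ⟨_, ⟨y ⟨0, hn⟩, hQVi, rfl⟩⟩
                have hmem := Set.Nonempty.csSup_mem hne (Set.toFinite _)
                obtain ⟨v₀, hv₀, heq⟩ := hmem
                exact ⟨v₀, hv₀, heq⟩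
              have hQv₀ : outputMarginal Q W v₀ = (maxInvQV Q W)⁻¹ := by
                rw [← hv₀eq, inv_inv]
              obtain ⟨v₁, hv₁ne, hv₁pos⟩ : ∃ v₁, v₁ ≠ v₀ ∧ 0 < outputMarginal Q W v₁ := by
                by_contra hno
                push_neg at hno
                have hz : ∑ v ∈ Finset.univ.erase v₀, outputMarginal Q W v = 0 :=
                  Finset.sum_eq_zero fun v hv =>
                    le_antisymm (hno v (Finset.ne_of_mem_erase hv)) (hQVpmf.1 v)
                have hsum : ∑ v, outputMarginal Q W v = outputMarginal Q W v₀ := by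
                  rw [← Finset.add_sum_erase _ _ (Finset.mem_univ v₀), hz, add_zero]
                rw [hQVpmf.2, hQv₀] at hsum
                linarith
              have hv₁ge : (maxInvQV Q W)⁻¹ ≤ outputMarginal Q W v₁ := by
                have h := hmaxge v₁ hv₁pos
                rw [← inv_inv (outputMarginal Q W v₁)]
                exact inv_anti₀ (inv_pos.2 hv₁pos) h
              have hsum2 : outputMarginal Q W v₁ + outputMarginal Q W v₀ ≤ 1 := by
                rw [← hQVpmf.2, ← Finset.sum_pair hv₁ne]
                exact Finset.sum_le_sum_of_subset_of_nonneg (Finset.subset_univ _)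
                  (fun v _ _ => hQVpmf.1 v)
              rw [hQv₀] at hsum2
              linarith
            have hPle2 : prodPMF (outputMarginal Q W) n y ≤ (1/2:ℝ) ^ n := by
              rw [hPeq, ← inv_pow]
              exact pow_le_pow_left₀ (inv_nonneg.2 hmaxpos.le) hhalf n
            -- now the product bound
            have hq : ∑ x : Fin n → U,
                (@ite ℝ ((x, y) ∉ typicalSet Q W n ε ∧ prodChannel W n x y = 1)
                  (Classical.propDecidable _) (prodPMF Q n x) 0)
                ≤ prodPMF (outputMarginal Q W) n y := by
              rw [← sum_prodPMF_mul_prodChannel n y]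
              apply Finset.sum_le_sum
              intro x _
              split
              · rename_i h
                rw [h.2, mul_one]
              · exact mul_nonneg (prodPMF_nonneg hQ.1 n x)
                  (prodChannel_nonneg hW n x y)
            calc cbP Q n M (fun C => 0 < prodPMF (outputMarginal Q W) n y ∧
                  (maxInvQV Q W) ^ n ≤ DC2 Q W n M ε C y)
                ≤ cbP Q n M (fun C => ∀ m, ((C m, y) ∉ typicalSet Q W n ε ∧
                    prodChannel W n (C m) y = 1)) := cbP_mono hQ n M hstruct
              _ ≤ (prodPMF (outputMarginal Q W) n y) ^ M :=
                  cbP_forall_le hQ n M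
                    (fun x => (x, y) ∉ typicalSet Q W n ε ∧ prodChannel W n x y = 1)
                    _ hq
              _ ≤ prodPMF (outputMarginal Q W) n y * ((1/2:ℝ)) ^ (n * (M - 1)) := by
                  have hMsplit : M = (M - 1) + 1 := (Nat.succ_pred_eq_of_pos hMpos).symm
                  calc (prodPMF (outputMarginal Q W) n y) ^ M
                      = (prodPMF (outputMarginal Q W) n y) ^ (M - 1) *
                          prodPMF (outputMarginal Q W) n y := by
                        rw [hMsplit]
                        rw [pow_succ]
                        rw [← hMsplit]
                    _ ≤ ((1/2:ℝ) ^ n) ^ (M - 1) * prodPMF (outputMarginal Q W) n y := by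
                        apply mul_le_mul_of_nonneg_right _ hy0.le
                        exact pow_le_pow_left₀ hy0.le hPle2 (M - 1)
                    _ = prodPMF (outputMarginal Q W) n y * ((1/2:ℝ)) ^ (n * (M - 1)) := by
                        rw [← pow_mul, mul_comm]
          · have hzero : cbP Q n M (fun C => 0 < prodPMF (outputMarginal Q W) n y ∧
                (maxInvQV Q W) ^ n ≤ DC2 Q W n M ε C y) = 0 := by
              unfold cbP
              apply Finset.sum_eq_zero
              intro C _
              rw [if_neg (fun h => hex ⟨C, h⟩)]
            rw [hzero]
            have h1 : 0 ≤ prodPMF (outputMarginal Q W) n y := prodPMF_nonneg hQVpmf.1 n y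
            positivity
        refine le_trans (Finset.sum_le_sum fun y _ => hy3 y) ?_
        rw [← Finset.sum_mul, (isPMF_prodPMF hQVpmf n).2, one_mul]
        -- (1/2)^(n(M-1)) ≤ exp(-(1/3) 2^{n(R-β₁)})
        have hhalfexp : ((1/2:ℝ)) ^ (n * (M - 1))
            = Real.exp (-(((n * (M - 1) : ℕ) : ℝ) * Real.log 2)) := by
          have h1 : ((1/2:ℝ)) ^ (n * (M - 1)) = (((2:ℝ) ^ (n * (M-1)))⁻¹) := by
            rw [one_div, inv_pow]
          rw [h1, Real.exp_neg]
          congr 1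
          rw [← Real.log_pow, Real.exp_log (by positivity)]
        rw [hhalfexp]
        apply Real.exp_le_exp.2
        have hstep1 : (2:ℝ) ^ ((n:ℝ) * (R - β₁)) ≤ (M:ℝ) := by
          refine le_trans (le_trans ?_ (le_refl ((2:ℝ) ^ ((n:ℝ) * R)))) hMreal
          apply Real.rpow_le_rpow_of_exponent_le one_le_two
          nlinarith
        have hcast : ((n * (M - 1) : ℕ) : ℝ) = (n:ℝ) * ((M:ℝ) - 1) := by
          rw [Nat.cast_mul, Nat.cast_sub hMpos, Nat.cast_one]
        rw [hcast]
        have hlog2 := Real.log_two_gt_d9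
        have hM2r : (2:ℝ) ≤ (M:ℝ) := by exact_mod_cast hM2
        have hn1r : (1:ℝ) ≤ (n:ℝ) := by exact_mod_cast hn
        have haux : ((M:ℝ) - 1) * Real.log 2 ≤ (n:ℝ) * (((M:ℝ) - 1) * Real.log 2) :=
          le_mul_of_one_le_left
            (mul_nonneg (by linarith : (0:ℝ) ≤ (M:ℝ) - 1) (by linarith : (0:ℝ) ≤ Real.log 2))
            hn1r
        have hfin : (M:ℝ) / 3 ≤ (n:ℝ) * ((M:ℝ) - 1) * Real.log 2 := by
          nlinarith only [hM2r, hlog2, hn1r, haux]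
        linarith only [hstep1, hfin]
    have hT2 : cbP Q n M (fun C =>
        ¬(∀ y : Fin n → V, 0 < prodPMF (outputMarginal Q W) n y →
          DC1 Q W n M ε C y < 1 + δ))
        ≤ (Fintype.card V : ℝ) ^ n *
            Real.exp (-(1 / 3) * (2 : ℝ) ^ ((n : ℝ) * (R - mutualInfo Q W - ε - 2 * β₂))) := by
      have himp : ∀ C : Fin M → Fin n → U,
          ¬(∀ y : Fin n → V, 0 < prodPMF (outputMarginal Q W) n y →
            DC1 Q W n M ε C y < 1 + δ) →
          ∃ y : Fin n → V, 0 < prodPMF (outputMarginal Q W) n y ∧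
            1 + δ ≤ DC1 Q W n M ε C y := by
        intro C hC
        push_neg at hC
        obtain ⟨y, hy, hD⟩ := hC
        exact ⟨y, hy, hD⟩
      refine le_trans (cbP_mono hQ n M himp) ?_
      refine le_trans (cbP_exists_le hQ n M _) ?_
      have hy2 : ∀ y : Fin n → V,
          cbP Q n M (fun C => 0 < prodPMF (outputMarginal Q W) n y ∧
            1 + δ ≤ DC1 Q W n M ε C y)
          ≤ Real.exp (-(1 / 3) *
              (2 : ℝ) ^ ((n : ℝ) * (R - mutualInfo Q W - ε - 2 * β₂))) := by
        intro y
        by_cases hy : 0 < prodPMF (outputMarginal Q W) n y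
        · set g : (Fin n → U) → ℝ := fun x =>
            (if (x, y) ∈ typicalSet Q W n ε then prodChannel W n x y else 0) /
              prodPMF (outputMarginal Q W) n y with hgdef
          have hg0 : ∀ x, 0 ≤ g x := fun x => by
            apply div_nonneg _ hy.le
            split
            · exact prodChannel_nonneg hW n x y
            · exact le_refl 0
          have hgB : ∀ x, g x ≤ B := by
            intro x
            rw [hgdef]
            dsimp only
            by_cases htp : (x, y) ∈ typicalSet Q W n ε
            · rw [if_pos htp]
              rcases (prodChannel_nonneg hW n x y).lt_or_eq with hc | hc
              · have hrpos : 0 < prodChannel W n x y / prodPMF (outputMarginal Q W) n y :=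
                  div_pos hc hy
                have hlog : (1 / (n:ℝ)) * Real.logb 2
                    (prodChannel W n x y / prodPMF (outputMarginal Q W) n y)
                    ≤ mutualInfo Q W + ε := htp
                have hlogn : Real.logb 2
                    (prodChannel W n x y / prodPMF (outputMarginal Q W) n y)
                    ≤ (n:ℝ) * (mutualInfo Q W + ε) := by
                  have h2 := mul_le_mul_of_nonneg_left hlog hnr.le
                  have h3 : (n:ℝ) * ((1 / (n:ℝ)) * Real.logb 2
                      (prodChannel W n x y / prodPMF (outputMarginal Q W) n y))
                      = Real.logb 2
                      (prodChannel W n x y / prodPMF (outputMarginal Q W) n y) := by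
                    field_simp
                  rw [h3] at h2
                  exact h2
                have h4 := (Real.logb_le_iff_le_rpow one_lt_two hrpos).1 hlogn
                rw [hBdef]
                exact h4
              · rw [← hc, zero_div]
                exact hB0.le
            · rw [if_neg htp, zero_div]
              exact hB0.le
          have hEg : ∑ x, prodPMF Q n x * g x ≤ 1 := by
            rw [hgdef]
            dsimp only
            have heq : ∑ x : Fin n → U, prodPMF Q n x *
                ((if (x, y) ∈ typicalSet Q W n ε then prodChannel W n x y else 0) /
                  prodPMF (outputMarginal Q W) n y)
                = (∑ x : Fin n → U, prodPMF Q n x *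
                    (if (x, y) ∈ typicalSet Q W n ε then prodChannel W n x y else 0)) /
                  prodPMF (outputMarginal Q W) n y := by
              rw [Finset.sum_div]
              exact Finset.sum_congr rfl fun x _ => (mul_div_assoc _ _ _).symm
            rw [heq, div_le_one hy]
            calc ∑ x : Fin n → U, prodPMF Q n x *
                  (if (x, y) ∈ typicalSet Q W n ε then prodChannel W n x y else 0)
                ≤ ∑ x : Fin n → U, prodPMF Q n x * prodChannel W n x y := by
                  apply Finset.sum_le_sum
                  intro x _
                  apply mul_le_mul_of_nonneg_left _ (prodPMF_nonneg hQ.1 n x)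
                  split
                  · exact le_refl _
                  · exact prodChannel_nonneg hW n x y
              _ = prodPMF (outputMarginal Q W) n y := sum_prodPMF_mul_prodChannel n y
          have hDC1g : ∀ C : Fin M → Fin n → U,
              DC1 Q W n M ε C y = (M:ℝ)⁻¹ * ∑ m, g (C m) := by
            intro C
            unfold DC1 PC1
            rw [hgdef]
            dsimp only
            rw [mul_div_assoc, Finset.sum_div]
          have hincl : ∀ C : Fin M → Fin n → U,
              (0 < prodPMF (outputMarginal Q W) n y ∧ 1 + δ ≤ DC1 Q W n M ε C y) →
              (1 + δ) * (M:ℝ) ≤ ∑ m, g (C m) := by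
            intro C hC
            obtain ⟨_, hD⟩ := hC
            rw [hDC1g C] at hD
            have h2 := mul_le_mul_of_nonneg_left hD hMr0.le
            have h3 : (M:ℝ) * ((M:ℝ)⁻¹ * ∑ m, g (C m)) = ∑ m, g (C m) := by
              field_simp
            rw [h3] at h2
            calc (1 + δ) * (M:ℝ) = (M:ℝ) * (1 + δ) := mul_comm _ _
              _ ≤ ∑ m, g (C m) := h2
          refine le_trans (cbP_mono hQ n M hincl) ?_
          refine le_trans (chernoff_B hQ n M g B δ hB0 hδ0 hδ1 hg0 hgB hEg) ?_
          apply Real.exp_le_exp.2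
          have hkey : (2:ℝ) ^ ((n:ℝ) * (R - mutualInfo Q W - ε - 2 * β₂))
              ≤ (M:ℝ) * δ^2 / B := by
            have heq : (2:ℝ) ^ ((n:ℝ) * (R - mutualInfo Q W - ε - 2 * β₂))
                = (2:ℝ) ^ ((n:ℝ) * R) * δ^2 / B := by
              rw [hδdef, hBdef, sq, ← Real.rpow_add two_pos,
                ← Real.rpow_add two_pos, ← Real.rpow_sub two_pos]
              congr 1
              ring
            rw [heq]
            have h1 : (2:ℝ) ^ ((n:ℝ) * R) * δ^2 ≤ (M:ℝ) * δ^2 :=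
              mul_le_mul_of_nonneg_right hMreal (sq_nonneg δ)
            exact (div_le_div_iff_of_pos_right hB0).2 h1

          linarith
        · have hzero : cbP Q n M (fun C => 0 < prodPMF (outputMarginal Q W) n y ∧
              1 + δ ≤ DC1 Q W n M ε C y) = 0 := by
            unfold cbP
            apply Finset.sum_eq_zero
            intro C _
            rw [if_neg (fun h => hy h.1)]
          rw [hzero]
          positivity
      refine le_trans (Finset.sum_le_sum fun y _ => hy2 y) ?_
      rw [Finset.sum_const, Finset.card_univ, nsmul_eq_mul]
      apply le_of_eq
      congr 1
      rw [Fintype.card_fun]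
      push_cast
      rw [Fintype.card_fin]
    calc cbP Q n M (fun C => ¬(
          (∑ y : Fin n → V, PC2 Q W n M ε C y < 2 * μ) ∧
          (∀ y : Fin n → V, 0 < prodPMF (outputMarginal Q W) n y →
            DC1 Q W n M ε C y < 1 + δ) ∧
          (∀ y : Fin n → V, 0 < prodPMF (outputMarginal Q W) n y →
            DC2 Q W n M ε C y < (maxInvQV Q W) ^ n)))
        ≤ cbP Q n M (fun C =>
            (¬(∑ y : Fin n → V, PC2 Q W n M ε C y < 2 * μ) ∨
             ¬(∀ y : Fin n → V, 0 < prodPMF (outputMarginal Q W) n y →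
               DC2 Q W n M ε C y < (maxInvQV Q W) ^ n)) ∨
            ¬(∀ y : Fin n → V, 0 < prodPMF (outputMarginal Q W) n y →
              DC1 Q W n M ε C y < 1 + δ)) := by
          apply cbP_mono hQ n M
          intro C hC
          tauto
      _ ≤ cbP Q n M (fun C =>
            ¬(∑ y : Fin n → V, PC2 Q W n M ε C y < 2 * μ) ∨
            ¬(∀ y : Fin n → V, 0 < prodPMF (outputMarginal Q W) n y →
              DC2 Q W n M ε C y < (maxInvQV Q W) ^ n))
          + cbP Q n M (fun C =>
            ¬(∀ y : Fin n → V, 0 < prodPMF (outputMarginal Q W) n y →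
              DC1 Q W n M ε C y < 1 + δ)) := cbP_or_le hQ n M _ _
      _ ≤ _ := add_le_add hT1 hT2
end

section
/- Deterministic relative-entropy bound for good codebooks: Fix ε > 0, β₁ > 0, β₂ > 0, and n with β₁ n ≥ 1. Let 𝒞 be any codebook (tuple of codewords in the support of Q_{U^n}) such that (i) ∑_{v^n} P_{𝒞,2}(v^n) ≤ 2 · 2^{−β₁ n}, (ii) D_{𝒞,1}(v^n) ≤ 1 + 2^{−β₂ n} for all v^n with Q_{V^n}(v^n) > 0, and (iii) D_{𝒞,2}(v^n) ≤ (max_{v : Q_V(v) > 0} 1/Q_V(v))^n for all v^n with Q_{V^n}(v^n) > 0. Then d(P_{V^n|𝒞}, Q_{V^n}) ≤ 2 · 2^{−β₁ n} (β₁ n + log₂ e − 1) + 2^{−β₂ n} log₂ e + 2n · 2^{−β₁ n} log₂ (max_{v : Q_V(v) > 0} 1/Q_V(v)). -/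
open scoped BigOperators Classical
open Finset

lemma logb_one_add_le {u : ℝ} (hu : 0 ≤ u) :
    Real.logb 2 (1 + u) ≤ u * Real.logb 2 (Real.exp 1) := by
  have h2 : (0:ℝ) < Real.log 2 := Real.log_pos one_lt_two
  have hlog : Real.log (1 + u) ≤ u := by
    have := Real.log_le_sub_one_of_pos (x := 1 + u) (by linarith)
    linarith
  rw [Real.logb, Real.logb, Real.log_exp, div_le_iff₀ h2]
  calc Real.log (1+u) ≤ u := hlog
    _ = u * (1 / Real.log 2) * Real.log 2 := by field_simp

lemma logb_e_pos : 0 < Real.logb 2 (Real.exp 1) := by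
  have h2 : (0:ℝ) < Real.log 2 := Real.log_pos one_lt_two
  rw [Real.logb, Real.log_exp]; positivity

lemma pointA (q p1 p2 δ K : ℝ) (hq : 0 < q) (hp1 : 0 ≤ p1) (hp2 : 0 ≤ p2)
    (hδ : 0 ≤ δ) (hK : 1 ≤ K) (hd1 : p1 / q ≤ 1 + δ) (hd2 : p2 / q ≤ K) :
    (p1 + p2) * Real.logb 2 ((p1 + p2) / q) ≤
      δ * Real.logb 2 (Real.exp 1) * (p1 + p2)
        + (Real.logb 2 (Real.exp 1) + Real.logb 2 (1 + K)) * p2 := by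
  set L := Real.logb 2 (Real.exp 1) with hLdef
  have hL : 0 < L := logb_e_pos
  have hBnn : 0 ≤ Real.logb 2 (1 + K) :=
    Real.logb_nonneg one_lt_two (by linarith)
  have hδ1 : Real.logb 2 (1 + δ) ≤ δ * L := logb_one_add_le hδ
  have part1 : p1 * Real.logb 2 ((p1 + p2) / q) ≤ δ * L * p1 + L * p2 := by
    rcases eq_or_lt_of_le hp1 with h0 | h0
    · rw [← h0]; simp; positivity
    · have hratio : (p1 + p2) / q = (p1 / q) * (1 + p2 / p1) := by
        field_simp
      have hpq : 0 < p1 / q := div_pos h0 hq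
      have h1p : 0 < 1 + p2 / p1 := by positivity
      have hsplit : Real.logb 2 ((p1 + p2) / q)
          = Real.logb 2 (p1 / q) + Real.logb 2 (1 + p2 / p1) := by
        rw [hratio, Real.logb_mul (ne_of_gt hpq) (ne_of_gt h1p)]
      have hb1 : Real.logb 2 (p1 / q) ≤ δ * L := by
        refine le_trans ?_ hδ1
        exact (Real.logb_le_logb one_lt_two hpq (by linarith)).2 hd1
      have hb2 : Real.logb 2 (1 + p2 / p1) ≤ (p2 / p1) * L :=
        logb_one_add_le (by positivity)
      have hkey : Real.logb 2 ((p1 + p2) / q) ≤ δ * L + (p2 / p1) * L := by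
        rw [hsplit]; linarith
      calc p1 * Real.logb 2 ((p1 + p2) / q) ≤ p1 * (δ * L + (p2 / p1) * L) :=
            mul_le_mul_of_nonneg_left hkey hp1
        _ = δ * L * p1 + L * p2 := by field_simp
  have part2 : p2 * Real.logb 2 ((p1 + p2) / q)
      ≤ δ * L * p2 + Real.logb 2 (1 + K) * p2 := by
    rcases eq_or_lt_of_le hp2 with h0 | h0
    · rw [← h0]; simp
    · have hpq : 0 < (p1 + p2) / q := div_pos (by linarith) hq
      have hadd : (p1 + p2) / q = p1 / q + p2 / q := add_div _ _ _
      have hub : (p1 + p2) / q ≤ (1 + δ) * (1 + K) := by nlinarith [hadd]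
      have hlog : Real.logb 2 ((p1 + p2) / q) ≤ δ * L + Real.logb 2 (1 + K) := by
        have h1 : Real.logb 2 ((p1 + p2) / q) ≤ Real.logb 2 ((1 + δ) * (1 + K)) :=
          (Real.logb_le_logb one_lt_two hpq (by nlinarith)).2 hub
        have h2 : Real.logb 2 ((1 + δ) * (1 + K))
            = Real.logb 2 (1 + δ) + Real.logb 2 (1 + K) := by
          rw [Real.logb_mul (by positivity) (by positivity)]
        linarith
      calc p2 * Real.logb 2 ((p1 + p2) / q)
          ≤ p2 * (δ * L + Real.logb 2 (1 + K)) :=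
            mul_le_mul_of_nonneg_left hlog hp2
        _ = δ * L * p2 + Real.logb 2 (1 + K) * p2 := by ring
  calc (p1 + p2) * Real.logb 2 ((p1 + p2) / q)
      = p1 * Real.logb 2 ((p1 + p2) / q) + p2 * Real.logb 2 ((p1 + p2) / q) := by ring
    _ ≤ (δ * L * p1 + L * p2) + (δ * L * p2 + Real.logb 2 (1 + K) * p2) := by
        linarith
    _ = δ * L * (p1 + p2) + (L + Real.logb 2 (1 + K)) * p2 := by ring

lemma pointB (q p δ K : ℝ) (hq : 0 < q) (hp : 0 < p)
    (hδ : 0 ≤ δ) (hK : 1 ≤ K) (hd : p / q ≤ (1 + δ) * (1 + K)) :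
    p * Real.logb 2 (p / q) ≤
      p * (δ * Real.logb 2 (Real.exp 1) + Real.logb 2 (1 + K)) := by
  have hpq : 0 < p / q := div_pos hp hq
  have hδ1 : Real.logb 2 (1 + δ) ≤ δ * Real.logb 2 (Real.exp 1) := logb_one_add_le hδ
  have h1 : Real.logb 2 (p / q) ≤ Real.logb 2 ((1 + δ) * (1 + K)) :=
    (Real.logb_le_logb one_lt_two hpq (by nlinarith)).2 hd
  have h2 : Real.logb 2 ((1 + δ) * (1 + K))
      = Real.logb 2 (1 + δ) + Real.logb 2 (1 + K) := by
    rw [Real.logb_mul (by positivity) (by positivity)]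
  exact mul_le_mul_of_nonneg_left (by linarith) hp.le

lemma keyIneq (K t s A c : ℝ) (hK : 1 ≤ K) (ht0 : 0 < t) (ht1 : t ≤ 1)
    (hs0 : 0 ≤ s) (hst : s ≤ t)
    (hA1 : A ≤ c + (Real.logb 2 (Real.exp 1) + Real.logb 2 (1 + K)) * s)
    (hA2 : A ≤ c + Real.logb 2 (1 + K)) :
    A ≤ c + t * (Real.logb 2 (Real.exp 1) + Real.logb 2 K - Real.logb 2 t) := by
  set L := Real.logb 2 (Real.exp 1) with hLdef
  set B := Real.logb 2 (1 + K) with hBdef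
  have hL : 0 < L := logb_e_pos
  have hKpos : (0:ℝ) < K := by linarith
  have h1K : (0:ℝ) < 1 + K := by linarith
  have hB0 : 0 ≤ B := Real.logb_nonneg one_lt_two (by linarith)
  have hKL : B ≤ K * L := by
    have he : 1 + K ≤ Real.exp K := by
      have := Real.add_one_le_exp K; linarith
    have h1 : B ≤ Real.logb 2 (Real.exp K) :=
      (Real.logb_le_logb one_lt_two h1K (Real.exp_pos K)).2 he
    have h2 : Real.logb 2 (Real.exp K) = K * L := by
      rw [hLdef, Real.logb, Real.logb, Real.log_exp, Real.log_exp]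
      ring
    linarith
  rcases le_or_gt (t * (1 + K)) K with hc | hc
  · -- small t case: use hA1
    have hBt : B ≤ Real.logb 2 K - Real.logb 2 t := by
      have ht' : t ≤ K / (1 + K) := by
        rw [le_div_iff₀ h1K]; linarith
      have hlt : Real.logb 2 t ≤ Real.logb 2 (K / (1 + K)) :=
        (Real.logb_le_logb one_lt_two ht0 (by positivity)).2 ht'
      have : Real.logb 2 (K / (1 + K)) = Real.logb 2 K - B := by
        rw [hBdef, Real.logb_div (ne_of_gt hKpos) (ne_of_gt h1K)]
      linarith
    have hstep : (L + B) * s ≤ t * (L + Real.logb 2 K - Real.logb 2 t) := by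
      have h1 : (L + B) * s ≤ (L + B) * t :=
        mul_le_mul_of_nonneg_left hst (by linarith)
      have h2 : (L + B) * t ≤ (L + (Real.logb 2 K - Real.logb 2 t)) * t :=
        mul_le_mul_of_nonneg_right (by linarith) ht0.le
      nlinarith [h1, h2]
    linarith
  · -- large t case: use hA2
    set t0 : ℝ := K / (1 + K) with ht0def
    have ht0pos : 0 < t0 := by positivity
    have ht0lt : t0 < t := by
      rw [ht0def, div_lt_iff₀ h1K]; linarith
    have htK : t ≤ K := le_trans ht1 hK
    -- tangent bound on logb t
    have htan : Real.logb 2 t ≤ Real.logb 2 t0 + ((t - t0) / t0) * L := by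
      have hlog : Real.log (t / t0) ≤ t / t0 - 1 :=
        Real.log_le_sub_one_of_pos (by positivity)
      have hld : Real.log (t / t0) = Real.log t - Real.log t0 :=
        Real.log_div (ne_of_gt ht0) (ne_of_gt ht0pos)
      have h2 : (0:ℝ) < Real.log 2 := Real.log_pos one_lt_two
      have hL2 : L = 1 / Real.log 2 := by
        rw [hLdef, Real.logb, Real.log_exp]
      have hdiv : (t / t0 - 1) = (t - t0) / t0 := by field_simp
      rw [Real.logb, Real.logb, hL2]
      rw [hld, hdiv] at hlog
      calc Real.log t / Real.log 2
          ≤ (Real.log t0 + (t - t0) / t0) / Real.log 2 :=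
            (div_le_div_iff_of_pos_right h2).mpr (by linarith)
        _ = Real.log t0 / Real.log 2 + (t - t0) / t0 * (1 / Real.log 2) := by ring
    have hlogt0 : Real.logb 2 t0 = Real.logb 2 K - B := by
      rw [ht0def, hBdef, Real.logb_div (ne_of_gt hKpos) (ne_of_gt h1K)]
    -- quadratic inequality
    have hfrac : (t - t0) / t0 = (t * (1 + K) - K) / K := by
      rw [ht0def]; field_simp
    have e1 : 0 ≤ (1 - t) * (K * L - B) := by
      apply mul_nonneg <;> linarith
    have e2 : 0 ≤ L * ((K - t) * (t * (1 + K) - K)) := by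
      apply mul_nonneg hL.le; apply mul_nonneg <;> linarith
    have main : K * B ≤ t * K * L + t * K * B - t * (t * (1 + K) - K) * L := by
      nlinarith [e1, e2]
    have hquad : B ≤ t * (L + B - ((t * (1 + K) - K) / K) * L) := by
      have expand : t * (L + B - ((t * (1 + K) - K) / K) * L)
          = (t * K * L + t * K * B - t * (t * (1 + K) - K) * L) / K := by
        field_simp
      rw [expand, le_div_iff₀ hKpos]
      linarith [main]
    have hfinal : B ≤ t * (L + Real.logb 2 K - Real.logb 2 t) := by
      have hup : Real.logb 2 t ≤ Real.logb 2 K - B + ((t * (1 + K) - K) / K) * L := by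
        rw [← hfrac]; rw [hlogt0] at htan; linarith
      have := mul_le_mul_of_nonneg_left (sub_le_sub_left hup (L + Real.logb 2 K)) ht0.le
      calc B ≤ t * (L + B - ((t * (1 + K) - K) / K) * L) := hquad
        _ ≤ t * (L + Real.logb 2 K - Real.logb 2 t) := by nlinarith [hup]
    linarith


section MainProof

variable {U V : Type} [Fintype U] [Fintype V]

lemma ite_nonneg' (c : Prop) [Decidable c] (a : ℝ) (ha : 0 ≤ a) : 0 ≤ ite c a 0 := by
  split <;> simp [ha]

theorem klDiv_good_codebook_bound' 
    (Q : U → ℝ) (W : U → V → ℝ) (hQ : IsPMF Q) (hW : ∀ u, IsPMF (W u))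
    (ε : ℝ) (hε : 0 < ε) (β₁ : ℝ) (hβ₁ : 0 < β₁) (β₂ : ℝ) (hβ₂ : 0 < β₂)
    (n : ℕ) (hn : 1 ≤ β₁ * n) (M : ℕ) (hM : 0 < M)
    (C : Fin M → Fin n → U) (hC : ∀ m, 0 < prodPMF Q n (C m))
    (h1 : ∑ y : Fin n → V, PC2 Q W n M ε C y ≤ 2 * (2 : ℝ) ^ (-(β₁ * n)))
    (h2 : ∀ y : Fin n → V, 0 < prodPMF (outputMarginal Q W) n y →
      DC1 Q W n M ε C y ≤ 1 + (2 : ℝ) ^ (-(β₂ * n)))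
    (h3 : ∀ y : Fin n → V, 0 < prodPMF (outputMarginal Q W) n y →
      DC2 Q W n M ε C y ≤ (maxInvQV Q W) ^ n) :
    klDiv (inducedDist W n M C) (prodPMF (outputMarginal Q W) n) ≤
      2 * (2 : ℝ) ^ (-(β₁ * n)) * (β₁ * n + Real.logb 2 (Real.exp 1) - 1)
        + (2 : ℝ) ^ (-(β₂ * n)) * Real.logb 2 (Real.exp 1)
        + 2 * n * (2 : ℝ) ^ (-(β₁ * n)) * Real.logb 2 (maxInvQV Q W) := by
  obtain ⟨hQ0, hQ1⟩ := hQ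
  have hW0 : ∀ u v, 0 ≤ W u v := fun u v => (hW u).1 v
  -- basic facts about the output marginal
  have hQv0 : ∀ v, 0 ≤ outputMarginal Q W v := fun v =>
    Finset.sum_nonneg fun u _ => mul_nonneg (hQ0 u) (hW0 u v)
  have hQvsum : ∑ v, outputMarginal Q W v = 1 := by
    simp only [outputMarginal]
    rw [Finset.sum_comm]
    calc ∑ u, ∑ v, Q u * W u v = ∑ u, Q u * ∑ v, W u v := by
          simp [Finset.mul_sum]
      _ = ∑ u, Q u := by
          refine Finset.sum_congr rfl fun u _ => ?_
          rw [(hW u).2, mul_one]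
      _ = 1 := hQ1
  -- maxInvQV ≥ 1
  have hμ1 : 1 ≤ maxInvQV Q W := by
    obtain ⟨v₀, hv₀⟩ : ∃ v, 0 < outputMarginal Q W v := by
      by_contra hno
      push_neg at hno
      have : (1:ℝ) ≤ 0 := hQvsum ▸ Finset.sum_nonpos fun v _ => hno v
      linarith
    have hv₀le : outputMarginal Q W v₀ ≤ 1 := by
      have := Finset.single_le_sum (f := fun v => outputMarginal Q W v)
        (fun v _ => hQv0 v) (Finset.mem_univ v₀)
      rw [hQvsum] at this; exact this
    have h1le : 1 ≤ (outputMarginal Q W v₀)⁻¹ := by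
      rw [le_inv_comm₀ one_pos hv₀]; simpa using hv₀le
    have hmem : (outputMarginal Q W v₀)⁻¹ ∈
        ((fun v => (outputMarginal Q W v)⁻¹) '' {v | 0 < outputMarginal Q W v}) :=
      ⟨v₀, hv₀, rfl⟩
    have hbdd : BddAbove
        ((fun v => (outputMarginal Q W v)⁻¹) '' {v | 0 < outputMarginal Q W v}) :=
      (Set.toFinite _).bddAbove
    exact le_trans h1le (le_csSup hbdd hmem)
  have hK : 1 ≤ (maxInvQV Q W) ^ n := one_le_pow₀ hμ1
  set L := Real.logb 2 (Real.exp 1) with hLdef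
  have hL : 0 < L := logb_e_pos
  set B := Real.logb 2 (1 + (maxInvQV Q W) ^ n) with hBdef
  have hB0 : 0 ≤ B := Real.logb_nonneg one_lt_two (by linarith)
  have hδ0 : (0:ℝ) ≤ (2 : ℝ) ^ (-(β₂ * n)) := (Real.rpow_pos_of_pos two_pos _).le
  -- nonnegativity of the various distributions
  have hQn0 : ∀ y : Fin n → V, 0 ≤ prodPMF (outputMarginal Q W) n y := fun y =>
    Finset.prod_nonneg fun i _ => hQv0 _
  have hch0 : ∀ (x : Fin n → U) (y : Fin n → V), 0 ≤ prodChannel W n x y := fun x y =>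
    Finset.prod_nonneg fun i _ => hW0 _ _
  have hMpos : (0:ℝ) < (M:ℝ) := Nat.cast_pos.mpr hM
  have hP0 : ∀ y : Fin n → V, 0 ≤ inducedDist W n M C y := fun y =>
    mul_nonneg (by positivity) (Finset.sum_nonneg fun m _ => hch0 _ _)
  have hP10 : ∀ y : Fin n → V, 0 ≤ PC1 Q W n M ε C y := fun y =>
    mul_nonneg (by positivity)
      (Finset.sum_nonneg fun m _ => ite_nonneg' _ _ (hch0 _ _))
  have hP20 : ∀ y : Fin n → V, 0 ≤ PC2 Q W n M ε C y := fun y =>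
    mul_nonneg (by positivity)
      (Finset.sum_nonneg fun m _ => ite_nonneg' _ _ (hch0 _ _))
  have hPsplit : ∀ y : Fin n → V,
      inducedDist W n M C y = PC1 Q W n M ε C y + PC2 Q W n M ε C y := by
    intro y
    simp only [inducedDist, PC1, PC2, ← mul_add, ← Finset.sum_add_distrib]
    congr 1
    refine Finset.sum_congr rfl fun m _ => ?_
    by_cases h : (C m, y) ∈ typicalSet Q W n ε <;> simp [h]
  -- positivity of Qn on the support of P
  have hQnpos : ∀ y : Fin n → V, 0 < inducedDist W n M C y →
      0 < prodPMF (outputMarginal Q W) n y := by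
    intro y hy
    obtain ⟨m, -, hm⟩ : ∃ m ∈ Finset.univ, 0 < prodChannel W n (C m) y := by
      by_contra hno
      push_neg at hno
      have hsum : ∑ m, prodChannel W n (C m) y ≤ 0 :=
        Finset.sum_nonpos fun m hmem => (hno m hmem)
      have : inducedDist W n M C y ≤ 0 := by
        simp only [inducedDist]
        exact mul_nonpos_of_nonneg_of_nonpos (by positivity) hsum
      linarith
    have hWi : ∀ i, 0 < W (C m i) (y i) := by
      intro i
      rcases (hW0 (C m i) (y i)).lt_or_eq with h | h
      · exact h
      · exfalso
        have : prodChannel W n (C m) y = 0 := by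
          simp only [prodChannel]
          exact Finset.prod_eq_zero (Finset.mem_univ i) h.symm
        linarith
    have hQi : ∀ i, 0 < Q (C m i) := by
      intro i
      rcases (hQ0 (C m i)).lt_or_eq with h | h
      · exact h
      · exfalso
        have : prodPMF Q n (C m) = 0 := by
          simp only [prodPMF]
          exact Finset.prod_eq_zero (Finset.mem_univ i) h.symm
        have := hC m
        linarith
    simp only [prodPMF]
    refine Finset.prod_pos fun i _ => ?_
    calc (0:ℝ) < Q (C m i) * W (C m i) (y i) := mul_pos (hQi i) (hWi i)
      _ ≤ outputMarginal Q W (y i) :=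
          Finset.single_le_sum (f := fun u => Q u * W u (y i))
            (fun u _ => mul_nonneg (hQ0 u) (hW0 u _)) (Finset.mem_univ (C m i))
  -- the induced distribution sums to 1
  have hrow : ∀ m, ∑ y : Fin n → V, prodChannel W n (C m) y = 1 := by
    intro m
    simp only [prodChannel]
    calc ∑ y : Fin n → V, ∏ i, W (C m i) (y i)
        = ∑ y ∈ Fintype.piFinset (fun _ : Fin n => (Finset.univ : Finset V)),
            ∏ i, W (C m i) (y i) := by rw [Fintype.piFinset_univ]
      _ = ∏ i, ∑ v, W (C m i) v := (Finset.prod_univ_sum _ _).symm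
      _ = 1 := by
          refine Finset.prod_eq_one fun i _ => (hW _).2
  have hPsum : ∑ y : Fin n → V, inducedDist W n M C y = 1 := by
    simp only [inducedDist]
    rw [← Finset.mul_sum, Finset.sum_comm]
    have : ∑ m : Fin M, ∑ y : Fin n → V, prodChannel W n (C m) y = (M:ℝ) := by
      simp [hrow]
    rw [this, inv_mul_cancel₀ (ne_of_gt hMpos)]
  -- S2 facts
  have hS2nn : 0 ≤ ∑ y : Fin n → V, PC2 Q W n M ε C y :=
    Finset.sum_nonneg fun y _ => hP20 y
  -- facts about t
  have hteq : 2 * (2:ℝ) ^ (-(β₁ * n)) = (2:ℝ) ^ ((1:ℝ) + -(β₁ * n)) := by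
    rw [Real.rpow_add two_pos, Real.rpow_one]
  have ht0 : (0:ℝ) < 2 * (2:ℝ) ^ (-(β₁ * n)) := by positivity
  have ht1 : 2 * (2:ℝ) ^ (-(β₁ * n)) ≤ 1 := by
    rw [hteq]
    exact Real.rpow_le_one_of_one_le_of_nonpos one_le_two (by linarith)
  have hlogt : Real.logb 2 (2 * (2:ℝ) ^ (-(β₁ * n))) = 1 - β₁ * n := by
    rw [hteq]
    rw [Real.logb_rpow two_pos (by norm_num)]
    ring
  -- Chain A
  have chainA : klDiv (inducedDist W n M C) (prodPMF (outputMarginal Q W) n) ≤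
      (2:ℝ) ^ (-(β₂ * n)) * L + (L + B) * ∑ y : Fin n → V, PC2 Q W n M ε C y := by
    have hpt : ∀ y ∈ (Finset.univ : Finset (Fin n → V)),
        (if 0 < inducedDist W n M C y then
          inducedDist W n M C y *
            Real.logb 2 (inducedDist W n M C y / prodPMF (outputMarginal Q W) n y)
         else 0)
        ≤ (2:ℝ) ^ (-(β₂ * n)) * L * inducedDist W n M C y
            + (L + B) * PC2 Q W n M ε C y := by
      intro y _
      by_cases hy : 0 < inducedDist W n M C y
      · rw [if_pos hy]
        have hq := hQnpos y hy
        have hd1 : PC1 Q W n M ε C y / prodPMF (outputMarginal Q W) n y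
            ≤ 1 + (2:ℝ) ^ (-(β₂ * n)) := h2 y hq
        have hd2 : PC2 Q W n M ε C y / prodPMF (outputMarginal Q W) n y
            ≤ (maxInvQV Q W) ^ n := h3 y hq
        rw [hPsplit y]
        exact pointA _ _ _ _ _ hq (hP10 y) (hP20 y) hδ0 hK hd1 hd2
      · rw [if_neg hy]
        have := hP0 y
        have := hP20 y
        positivity
    calc klDiv (inducedDist W n M C) (prodPMF (outputMarginal Q W) n)
        = ∑ y : Fin n → V, (if 0 < inducedDist W n M C y then
            inducedDist W n M C y *
              Real.logb 2 (inducedDist W n M C y / prodPMF (outputMarginal Q W) n y)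
           else 0) := by simp only [klDiv]
      _ ≤ ∑ y : Fin n → V, ((2:ℝ) ^ (-(β₂ * n)) * L * inducedDist W n M C y
            + (L + B) * PC2 Q W n M ε C y) := Finset.sum_le_sum hpt
      _ = (2:ℝ) ^ (-(β₂ * n)) * L * ∑ y : Fin n → V, inducedDist W n M C y
            + (L + B) * ∑ y : Fin n → V, PC2 Q W n M ε C y := by
          rw [Finset.sum_add_distrib, ← Finset.mul_sum, ← Finset.mul_sum]
      _ = (2:ℝ) ^ (-(β₂ * n)) * L + (L + B) * ∑ y : Fin n → V, PC2 Q W n M ε C y := by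
          rw [hPsum, mul_one]
  -- Chain B
  have chainB : klDiv (inducedDist W n M C) (prodPMF (outputMarginal Q W) n) ≤
      (2:ℝ) ^ (-(β₂ * n)) * L + B := by
    have hpt : ∀ y ∈ (Finset.univ : Finset (Fin n → V)),
        (if 0 < inducedDist W n M C y then
          inducedDist W n M C y *
            Real.logb 2 (inducedDist W n M C y / prodPMF (outputMarginal Q W) n y)
         else 0)
        ≤ inducedDist W n M C y * ((2:ℝ) ^ (-(β₂ * n)) * L + B) := by
      intro y _
      by_cases hy : 0 < inducedDist W n M C y
      · rw [if_pos hy]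
        have hq := hQnpos y hy
        have hd1 : PC1 Q W n M ε C y / prodPMF (outputMarginal Q W) n y
            ≤ 1 + (2:ℝ) ^ (-(β₂ * n)) := h2 y hq
        have hd2 : PC2 Q W n M ε C y / prodPMF (outputMarginal Q W) n y
            ≤ (maxInvQV Q W) ^ n := h3 y hq
        have hd : inducedDist W n M C y / prodPMF (outputMarginal Q W) n y
            ≤ (1 + (2:ℝ) ^ (-(β₂ * n))) * (1 + (maxInvQV Q W) ^ n) := by
          have hadd : inducedDist W n M C y / prodPMF (outputMarginal Q W) n y
              = PC1 Q W n M ε C y / prodPMF (outputMarginal Q W) n y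
                + PC2 Q W n M ε C y / prodPMF (outputMarginal Q W) n y := by
            rw [hPsplit y, add_div]
          nlinarith [hadd, hδ0, hK]
        exact pointB _ _ _ _ hq hy hδ0 hK hd
      · rw [if_neg hy]
        have := hP0 y
        positivity
    calc klDiv (inducedDist W n M C) (prodPMF (outputMarginal Q W) n)
        = ∑ y : Fin n → V, (if 0 < inducedDist W n M C y then
            inducedDist W n M C y *
              Real.logb 2 (inducedDist W n M C y / prodPMF (outputMarginal Q W) n y)
           else 0) := by simp only [klDiv]
      _ ≤ ∑ y : Fin n → V, inducedDist W n M C y * ((2:ℝ) ^ (-(β₂ * n)) * L + B) :=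
          Finset.sum_le_sum hpt
      _ = (2:ℝ) ^ (-(β₂ * n)) * L + B := by
          rw [← Finset.sum_mul, hPsum, one_mul]
  -- combine via keyIneq
  have hmain := keyIneq ((maxInvQV Q W) ^ n) (2 * (2:ℝ) ^ (-(β₁ * n)))
    (∑ y : Fin n → V, PC2 Q W n M ε C y)
    (klDiv (inducedDist W n M C) (prodPMF (outputMarginal Q W) n))
    ((2:ℝ) ^ (-(β₂ * n)) * L) hK ht0 ht1 hS2nn h1 chainA chainB
  have hlogK : Real.logb 2 ((maxInvQV Q W) ^ n) = (n:ℝ) * Real.logb 2 (maxInvQV Q W) :=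
    Real.logb_pow _ _ _
  rw [hlogK, hlogt] at hmain
  calc klDiv (inducedDist W n M C) (prodPMF (outputMarginal Q W) n)
      ≤ (2:ℝ) ^ (-(β₂ * n)) * L + 2 * (2:ℝ) ^ (-(β₁ * n)) *
          (L + (n:ℝ) * Real.logb 2 (maxInvQV Q W) - (1 - β₁ * n)) := hmain
    _ = 2 * (2 : ℝ) ^ (-(β₁ * n)) * (β₁ * n + L - 1)
        + (2 : ℝ) ^ (-(β₂ * n)) * L
        + 2 * n * (2 : ℝ) ^ (-(β₁ * n)) * Real.logb 2 (maxInvQV Q W) := by ring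

end MainProof


/-- **Deterministic relative-entropy bound for good codebooks.** Any codebook satisfying the
three goodness conditions (i)–(iii) has
`d(P_{V^n|𝒞}, Q_{V^n}) ≤ 2·2^{−β₁n}(β₁n + log₂ e − 1) + 2^{−β₂n} log₂ e
  + 2n·2^{−β₁n} log₂(max_{v:Q_V(v)>0} 1/Q_V(v))`. -/
theorem klDiv_good_codebook_bound {U V : Type} [Fintype U] [Fintype V]
    (Q : U → ℝ) (W : U → V → ℝ) (hQ : IsPMF Q) (hW : ∀ u, IsPMF (W u))
    (ε : ℝ) (hε : 0 < ε) (β₁ : ℝ) (hβ₁ : 0 < β₁) (β₂ : ℝ) (hβ₂ : 0 < β₂)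
    (n : ℕ) (hn : 1 ≤ β₁ * n) (M : ℕ) (hM : 0 < M)
    (C : Fin M → Fin n → U) (hC : ∀ m, 0 < prodPMF Q n (C m))
    (h1 : ∑ y : Fin n → V, PC2 Q W n M ε C y ≤ 2 * (2 : ℝ) ^ (-(β₁ * n)))
    (h2 : ∀ y : Fin n → V, 0 < prodPMF (outputMarginal Q W) n y →
      DC1 Q W n M ε C y ≤ 1 + (2 : ℝ) ^ (-(β₂ * n)))
    (h3 : ∀ y : Fin n → V, 0 < prodPMF (outputMarginal Q W) n y →
      DC2 Q W n M ε C y ≤ (maxInvQV Q W) ^ n) :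
    klDiv (inducedDist W n M C) (prodPMF (outputMarginal Q W) n) ≤
      2 * (2 : ℝ) ^ (-(β₁ * n)) * (β₁ * n + Real.logb 2 (Real.exp 1) - 1)
        + (2 : ℝ) ^ (-(β₂ * n)) * Real.logb 2 (Real.exp 1)
        + 2 * n * (2 : ℝ) ^ (-(β₁ * n)) * Real.logb 2 (maxInvQV Q W) :=
  klDiv_good_codebook_bound' Q W hQ hW ε hε β₁ hβ₁ β₂ hβ₂ n hn M hM C hC h1 h2 h3
end
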